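/- arXiv:2403.01337 — 9 statements merged into one kernel-verified Lean document; each statement's English description precedes it below -/
import Mathlib

section
/- Let k be a natural number and let Λ be a connected k-graph such that the canonical localization functor i : Λ ⥤ Π(Λ) is injective on morphisms. If Λ is simply connected, then Λ is singly connected. -/
open CategoryTheory

/-- A `k`-graph structure on a small category `Λ`. -/
structure KGraph (k : ℕ) (Λ : Type) [SmallCategory Λ] where
  d : ∀ {X Y : Λ}, (X ⟶ Y) → (Fin k → ℕ)
  d_id : ∀ X : Λ, d (𝟙 X) = 0
  d_comp : ∀ {X Y Z : Λ} (f : X ⟶ Y) (g : Y ⟶ Z), d (f ≫ g) = d f + d g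
  factorisation : ∀ {X Z : Λ} (f : X ⟶ Z) (m n : Fin k → ℕ), d f = m + n →
    ∃! t : Σ Y : Λ, (X ⟶ Y) × (Y ⟶ Z),
      d t.2.1 = m ∧ d t.2.2 = n ∧ t.2.1 ≫ t.2.2 = f

/-- A functor is injective on morphisms if the induced map on the total space of
morphisms is injective. -/
def InjectiveOnMorphisms {C : Type*} [Category C] {D : Type*} [Category D] (F : C ⥤ D) : Prop :=
  Function.Injective
    (fun t : Σ X Y : C, X ⟶ Y => (⟨F.obj t.1, F.obj t.2.1, F.map t.2.2⟩ : Σ X Y : D, X ⟶ Y))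

/-- `Λ` is connected. -/
def IsConnectedKGraph (Λ : Type) [SmallCategory Λ] : Prop :=
  ∀ u v : Λ, Relation.EqvGen (fun a b => Nonempty (a ⟶ b)) u v

/-- `Λ` is singly connected: at most one morphism between any two objects. -/
def SinglyConnected (Λ : Type) [SmallCategory Λ] : Prop :=
  ∀ X Y : Λ, Subsingleton (X ⟶ Y)

/-- `Λ` is simply connected: the fundamental group at each vertex, i.e. the
endomorphism monoid of each object of the localization at all morphisms, is trivial. -/
def SimplyConnected (Λ : Type) [SmallCategory Λ] : Prop :=
  ∀ v : Λ, Subsingleton (End ((⊤ : MorphismProperty Λ).Q.obj v))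

/-- a connected `k`-graph that embeds in its fundamental groupoid and is
simply connected is singly connected. -/
theorem singlyConnected_of_simplyConnected (k : ℕ) (Λ : Type) [SmallCategory Λ]
    (S : KGraph k Λ) (hconn : IsConnectedKGraph Λ)
    (hinj : InjectiveOnMorphisms (⊤ : MorphismProperty Λ).Q)
    (hsimp : SimplyConnected Λ) :
    SinglyConnected Λ := by
  intro X Y
  constructor
  intro f g
  set Q := (⊤ : MorphismProperty Λ).Q
  have hg : IsIso (Q.map g) := Localization.inverts Q ⊤ g trivial
  have h : Q.map f ≫ inv (Q.map g) = 𝟙 (Q.obj X) :=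
    (hsimp X).elim (Q.map f ≫ inv (Q.map g)) (𝟙 (Q.obj X))
  have hfg : Q.map f = Q.map g := by
    have := congrArg (· ≫ Q.map g) h
    simpa using this
  have := hinj (a₁ := ⟨X, Y, f⟩) (a₂ := ⟨X, Y, g⟩) (by simp [hfg])
  simpa using this
end

section
/- Let k be a natural number and let Λ be a connected k-graph. Then Λ is simply connected if and only if for every group G, every 1-cocycle c on Λ with values in G is a coboundary, i.e. there is a function b from the objects of Λ to G such that c(f) = b(X)⁻¹ · b(Y) for every morphism f : X ⟶ Y. -/
open CategoryTheory

/-- A `1`-cocycle on `Λ` with values in a group `G`. -/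
structure Cocycle (Λ : Type) [SmallCategory Λ] (G : Type) [Group G] where
  c : ∀ {X Y : Λ}, (X ⟶ Y) → G
  c_id : ∀ X : Λ, c (𝟙 X) = 1
  c_comp : ∀ {X Y Z : Λ} (f : X ⟶ Y) (g : Y ⟶ Z), c (f ≫ g) = c f * c g

variable {Λ : Type} [SmallCategory Λ]

lemma allIso' {A B : (⊤ : MorphismProperty Λ).Localization} (g : A ⟶ B) : IsIso g := by
  have h := Localization.Construction.morphismProperty_eq_top
    (W := (⊤ : MorphismProperty Λ)) (MorphismProperty.isomorphisms _)
    (fun X Y f => (⊤ : MorphismProperty Λ).Q_inverts f trivial)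
    (fun X Y w hw => inferInstanceAs (IsIso (Localization.Construction.wIso w hw).inv))
  have : (MorphismProperty.isomorphisms _) g := by rw [h]; trivial
  exact this

lemma homNonempty' (hconn : IsConnectedKGraph Λ) (u w : Λ) :
    Nonempty ((⊤ : MorphismProperty Λ).Q.obj u ⟶ (⊤ : MorphismProperty Λ).Q.obj w) := by
  induction hconn u w with
  | rel a b h => exact ⟨(⊤ : MorphismProperty Λ).Q.map h.some⟩
  | refl a => exact ⟨𝟙 _⟩
  | symm a b _ ih => have := allIso' ih.some; exact ⟨inv ih.some⟩
  | trans a b cc _ _ ih1 ih2 => exact ⟨ih1.some ≫ ih2.some⟩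

/-- The functor to `SingleObj G` induced by a cocycle (inverting values to fix
the composition order mismatch). -/
def cocycleFunctor {G : Type} [Group G] (c : Cocycle Λ G) : Λ ⥤ SingleObj G where
  obj _ := SingleObj.star G
  map f := (c.c f)⁻¹
  map_id X := by
    rw [SingleObj.id_as_one, c.c_id, inv_one]
  map_comp f g := by
    rw [SingleObj.comp_as_mul, c.c_comp, mul_inv_rev]

theorem main_aux (hconn : IsConnectedKGraph Λ) :
    SimplyConnected Λ ↔
      ∀ (G : Type) [Group G] (c : Cocycle Λ G),
        ∃ b : Λ → G, ∀ (X Y : Λ) (f : X ⟶ Y), c.c f = (b X)⁻¹ * b Y := by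
  set W : MorphismProperty Λ := ⊤ with hW
  constructor
  · intro hsc G _ c
    by_cases hne : Nonempty Λ
    · obtain ⟨v₀⟩ := hne
      have hF : W.IsInvertedBy (cocycleFunctor c) := fun X Y f _ => by
        exact inferInstanceAs (IsIso (f := (cocycleFunctor c).map f))
      set L := Localization.Construction.lift (cocycleFunctor c) hF with hL
      have hfac := Localization.Construction.fac (cocycleFunctor c) hF
      -- choose connecting morphisms
      let u : ∀ X : Λ, (W.Q.obj v₀ ⟶ W.Q.obj X) := fun X => (homNonempty' hconn v₀ X).some
      have key : ∀ {X Y : Λ} (f : X ⟶ Y), u X ≫ W.Q.map f = u Y := by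
        intro X Y f
        have hiso := allIso' (u Y)
        have : (u X ≫ W.Q.map f) ≫ inv (u Y) = 𝟙 (W.Q.obj v₀) :=
          @Subsingleton.elim _ (hsc v₀) _ _
        calc u X ≫ W.Q.map f = ((u X ≫ W.Q.map f) ≫ inv (u Y)) ≫ u Y := by simp
        _ = u Y := by rw [this]; simp
      -- b X is the inverse of L applied to u X
      refine ⟨fun X => (L.map (u X) : G)⁻¹, fun X Y f => ?_⟩
      have h1 : L.map (u X) ≫ L.map (W.Q.map f) = L.map (u Y) := by
        rw [← L.map_comp, key f]
      have h2 : L.map (W.Q.map f) = (c.c f)⁻¹ := by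
        have := Functor.congr_hom hfac f
        simp at this; exact this
      rw [h2, SingleObj.comp_as_mul] at h1
      show c.c f = (L.map (u X))⁻¹⁻¹ * (L.map (u Y))⁻¹
      rw [inv_inv, ← h1]
      group
    · exact ⟨fun X => (hne ⟨X⟩).elim, fun X => (hne ⟨X⟩).elim⟩
  · intro hcob v
    haveI : ∀ {A B : W.Localization} (g : A ⟶ B), IsIso g := fun g => allIso' g
    -- connecting isomorphisms
    let σ : ∀ X : Λ, (W.Q.obj v ≅ W.Q.obj X) := fun X =>
      asIso (homNonempty' hconn v X).some
    -- the tautological cocycle valued in Aut (W.Q.obj v)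
    let c : Cocycle Λ (Aut (W.Q.obj v)) :=
      { c := fun {X Y} f => σ Y ≪≫ (asIso (W.Q.map f)).symm ≪≫ (σ X).symm
        c_id := fun X => by
          ext
          show ((σ X) ≪≫ (asIso (W.Q.map (𝟙 X))).symm ≪≫ (σ X).symm).hom = 𝟙 _
          simp
        c_comp := fun {X Y Z} f g => by
          show _ = Iso.trans _ _
          ext
          dsimp
          simp }
    obtain ⟨b, hb⟩ := hcob _ c
    -- t X : W.Q.obj v ⟶ W.Q.obj X
    let t : ∀ X : Λ, (W.Q.obj v ⟶ W.Q.obj X) := fun X => (b X).inv ≫ (σ X).hom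
    have key : ∀ {X Y : Λ} (f : X ⟶ Y), t X ≫ W.Q.map f = t Y := by
      intro X Y f
      have h := hb X Y f
      have h' : (c.c f).hom = ((b Y) ≪≫ (b X).symm).hom := by
        rw [h]; rfl
      have h2 : (σ X).hom ≫ W.Q.map f ≫ (σ Y).inv = (b X).hom ≫ (b Y).inv := by
        have h4 := congrArg (fun z : Aut (W.Q.obj v) => (z⁻¹).hom) h
        change (Iso.symm (σ Y ≪≫ (asIso (W.Q.map f)).symm ≪≫ (σ X).symm)).hom = (b X).hom ≫ (b Y).inv at h4
        simpa using h4
      have h3 : (σ X).hom ≫ W.Q.map f = ((b X).hom ≫ (b Y).inv) ≫ (σ Y).hom := by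
        rw [← Iso.comp_inv_eq, Category.assoc]
        exact h2
      simp only [t]
      rw [Category.assoc, h3]
      simp
      exact Iso.inv_hom_id_assoc (b X) _
    -- extend `t` to all objects of the localization
    let t' : ∀ A : W.Localization, (W.Q.obj v ⟶ A) := fun A =>
      t (A.as.obj) ≫ eqToHom ((Localization.Construction.objEquiv W).right_inv A)
    let P : MorphismProperty W.Localization := fun A B g => t' A ≫ g = t' B
    haveI : P.IsStableUnderComposition :=
      ⟨fun f g hf hg => by simp only [P] at *; rw [← Category.assoc, hf, hg]⟩
    have hP : P = ⊤ := by
      apply Localization.Construction.morphismProperty_eq_top' P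
      · intro X Y f
        show t' (W.Q.obj X) ≫ W.Q.map f = t' (W.Q.obj Y)
        have e1 : t' (W.Q.obj X) = t X := by simp [t']; exact Category.comp_id _
        have e2 : t' (W.Q.obj Y) = t Y := by simp [t']; exact Category.comp_id _
        rw [e1, e2, key]
      · intro A B e he
        show t' B ≫ e.inv = t' A
        rw [← he]; simp
    constructor
    intro e₁ e₂
    have h1 : P e₁ := by rw [hP]; trivial
    have h2 : P e₂ := by rw [hP]; trivial
    have hiso : IsIso (t' (W.Q.obj v)) := by
      simp only [t']
      infer_instance
    simp only [P] at h1 h2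
    exact (cancel_epi (t' (W.Q.obj v))).mp (h1.trans h2.symm)


/-- a connected `k`-graph is simply connected if and only if every
group-valued `1`-cocycle on it is a coboundary. -/
theorem simplyConnected_iff_cocycles_are_coboundaries (k : ℕ) (Λ : Type) [SmallCategory Λ]
    (S : KGraph k Λ) (hconn : IsConnectedKGraph Λ) :
    SimplyConnected Λ ↔
      ∀ (G : Type) [Group G] (c : Cocycle Λ G),
        ∃ b : Λ → G, ∀ (X Y : Λ) (f : X ⟶ Y), c.c f = (b X)⁻¹ * b Y := by
  exact main_aux hconn
end

section
/- Let k be a natural number and let Λ be a k-graph. Then the following are equivalent: (1) there exist a group G and an essential 1-cocycle c on Λ with values in G (i.e. a 1-cocycle whose restriction to each hom-set Hom(X, Y) is injective); (2) the canonical localization functor i : Λ ⥤ Π(Λ) is injective on morphisms. -/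
open CategoryTheory

/-- A cocycle is essential if its restriction to each hom-set is injective. -/
def Cocycle.Essential {Λ : Type} [SmallCategory Λ] {G : Type} [Group G]
    (c : Cocycle Λ G) : Prop :=
  ∀ X Y : Λ, Function.Injective (fun f : X ⟶ Y => c.c f)

section Aux

variable {Λ : Type} [SmallCategory Λ]

/-- every morphism in the localization at ⊤ is an isomorphism -/
lemma top_loc_isIso {X Y : (⊤ : MorphismProperty Λ).Localization} (f : X ⟶ Y) :
    IsIso f := by
  have htop : MorphismProperty.isomorphisms (⊤ : MorphismProperty Λ).Localization = ⊤ := by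
    refine Localization.Construction.morphismProperty_eq_top' _ (fun X Y f => ?_)
      (fun X Y e he => ?_)
    · exact Localization.inverts (⊤ : MorphismProperty Λ).Q ⊤ f trivial
    · show IsIso e.inv; infer_instance
  have : MorphismProperty.isomorphisms _ f := by rw [htop]; trivial
  exact this

end Aux

/-- a `k`-graph admits an essential group-valued cocycle if and only if
the canonical functor to its fundamental groupoid is injective on morphisms. -/
theorem essential_cocycle_iff_embeds (k : ℕ) (Λ : Type) [SmallCategory Λ]
    (S : KGraph k Λ) :
    (∃ (G : GrpCat) (c : Cocycle Λ G), c.Essential) ↔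
      InjectiveOnMorphisms (⊤ : MorphismProperty Λ).Q := by
  constructor
  · rintro ⟨G, c, hc⟩
    -- build the functor to the one-object groupoid on G
    let F : Λ ⥤ SingleObj G :=
      { obj := fun _ => SingleObj.star G
        map := fun f => (c.c f)⁻¹
        map_id := fun X => by
          show (c.c (𝟙 X))⁻¹ = _
          rw [c.c_id, inv_one]; rfl
        map_comp := fun f g => by
          show (c.c _)⁻¹ = _
          rw [c.c_comp, mul_inv_rev]; rfl }
    have hF : (⊤ : MorphismProperty Λ).IsInvertedBy F := fun X Y f _ => inferInstance
    let L := Localization.Construction.lift F hF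
    have hfac : (⊤ : MorphismProperty Λ).Q ⋙ L = F := Localization.Construction.fac F hF
    rintro ⟨X, Y, f⟩ ⟨X', Y', f'⟩ h
    simp only at h
    have hX : X = X' := congrArg (fun t : Σ A B : (⊤ : MorphismProperty Λ).Localization, A ⟶ B
      => t.1.as.obj) h
    subst hX
    have hY : Y = Y' := congrArg (fun t : Σ A B : (⊤ : MorphismProperty Λ).Localization, A ⟶ B
      => t.2.1.as.obj) h
    subst hY
    have hmm : (⊤ : MorphismProperty Λ).Q.map f = (⊤ : MorphismProperty Λ).Q.map f' := by
      have h3 := (Sigma.mk.inj_iff.mp ((Sigma.mk.inj_iff.mp h).2.eq)).2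
      exact eq_of_heq h3
    have h1 : F.map f = F.map f' := by
      rw [← hfac]
      exact congrArg L.map hmm
    have h2 : c.c f = c.c f' := inv_injective h1
    have : f = f' := hc X Y h2
    rw [this]
  · intro hinj
    set W := (⊤ : MorphismProperty Λ) with hW
    set D := W.Localization with hD
    haveI : ∀ {X Y : D} (f : X ⟶ Y), IsIso f := fun f => top_loc_isIso f
    -- setoid of connected components
    let s : Setoid D :=
      { r := fun x y => Nonempty (x ⟶ y)
        iseqv := ⟨fun x => ⟨𝟙 x⟩, fun ⟨f⟩ => ⟨inv f⟩, fun ⟨f⟩ ⟨g⟩ => ⟨f ≫ g⟩⟩ }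
    -- chosen morphism from the representative of the class of z to z
    have hσ : ∀ z : D, Nonempty ((Quotient.mk s z).out ⟶ z) := fun z =>
      Quotient.mk_out (s := s) z
    let σ : ∀ z : D, (Quotient.mk s z).out ⟶ z := fun z => (hσ z).some
    classical
    -- the conjugated automorphism family
    let b : ∀ {x y : D}, (x ⟶ y) → ∀ q : Quotient s, Aut (Quotient.out q) :=
      fun {x y} f q =>
        if h : q = Quotient.mk s x then
          eqToIso (congrArg Quotient.out h) ≪≫ asIso (σ x ≫ f ≫ inv (σ y)) ≪≫
            eqToIso (congrArg Quotient.out ((h.trans (Quotient.sound ⟨f⟩)))).symm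
        else Iso.refl _
    have hbcomp : ∀ {x y z : D} (f : x ⟶ y) (g : y ⟶ z) (q : Quotient s),
        b (f ≫ g) q = b f q ≪≫ b g q := by
      intro x y z f g q
      have hxy : Quotient.mk s x = Quotient.mk s y := Quotient.sound ⟨f⟩
      by_cases h : q = Quotient.mk s x
      · have hy : q = Quotient.mk s y := h.trans hxy
        simp only [b]
        erw [dif_pos h, dif_pos h, dif_pos hy]
        ext
        simp [eqToIso, asIso]
      · have hy : q ≠ Quotient.mk s y := fun hy => h (hy.trans hxy.symm)
        simp only [b]
        erw [dif_neg h, dif_neg h, dif_neg hy]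
        simp
        rfl
    have hbid : ∀ (x : D) (q : Quotient s), b (𝟙 x) q = Iso.refl _ := by
      intro x q
      by_cases h : q = Quotient.mk s x
      · simp only [b]
        erw [dif_pos h]
        ext
        simp [eqToIso, asIso]
      · simp only [b]
        erw [dif_neg h]
    -- the group
    let c₀ : Cocycle Λ (∀ q : Quotient s, Aut q.out) :=
      { c := fun {X Y} f => fun q => (b (W.Q.map f) q)⁻¹
        c_id := fun X => by
          funext q
          show (b (W.Q.map (𝟙 X)) q)⁻¹ = 1
          rw [CategoryTheory.Functor.map_id, hbid]
          rfl
        c_comp := fun {X Y Z} f g => by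
          funext q
          show (b (W.Q.map (f ≫ g)) q)⁻¹
            = (b (W.Q.map f) q)⁻¹ * (b (W.Q.map g) q)⁻¹
          rw [CategoryTheory.Functor.map_comp, hbcomp]
          rfl }
    refine ⟨GrpCat.of (∀ q : Quotient s, Aut q.out), c₀, ?_⟩
    intro X Y f f' hff
    have hq : b (W.Q.map f) (Quotient.mk s (W.Q.obj X))
        = b (W.Q.map f') (Quotient.mk s (W.Q.obj X)) := by
      have h0 := congrFun hff (Quotient.mk s (W.Q.obj X))
      have h0' : (b (W.Q.map f) (Quotient.mk s (W.Q.obj X))).symm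
          = (b (W.Q.map f') (Quotient.mk s (W.Q.obj X))).symm := h0
      exact inv_injective h0
    simp only [b] at hq
    erw [dif_pos rfl, dif_pos rfl] at hq
    have hq' := congrArg Iso.hom hq
    simp only [Iso.trans_hom, eqToIso.hom, asIso_hom] at hq'
    have hQmap : W.Q.map f = W.Q.map f' := by
      simp only [← Category.assoc] at hq'
      rw [cancel_mono, cancel_mono, cancel_epi] at hq'
      exact hq'
    have heq2 : (⟨X, Y, f⟩ : Σ A B : Λ, A ⟶ B) = ⟨X, Y, f'⟩ :=
      hinj (by simp only [hQmap])
    simpa using heq2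
end

section
/- Let k be a natural number, let Σ and Λ be connected k-graphs, and let p : Σ ⥤ Λ be a covering: a functor with d_Λ(p.map f) = d_Σ(f) for every morphism f, surjective on objects, and such that for every object v of Σ the induced maps from {morphisms of Σ with source v} to {morphisms of Λ with source p.obj v} and from {morphisms of Σ with target v} to {morphisms of Λ with target p.obj v} are bijections. Then the canonical localization functor i_Λ : Λ ⥤ Π(Λ) is injective on morphisms if and only if the canonical localization functor i_Σ : Σ ⥤ Π(Σ) is injective on morphisms. -/
open CategoryTheory

section Aux

variable {Sig Lam : Type} [SmallCategory Sig] [SmallCategory Lam] (p : Sig ⥤ Lam)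

lemma QisIso {C : Type} [SmallCategory C] {x y : C} (ℓ : x ⟶ y) :
    IsIso ((⊤ : MorphismProperty C).Q.map ℓ) :=
  (⊤ : MorphismProperty C).Q_inverts ℓ (MorphismProperty.top_apply _)

attribute [local instance] QisIso

variable (hsource : ∀ v : Sig, Function.Bijective
      (fun t : Σ Y : Sig, (v ⟶ Y) => (⟨p.obj t.1, p.map t.2⟩ : Σ Y : Lam, (p.obj v ⟶ Y))))
variable (htarget : ∀ v : Sig, Function.Bijective
      (fun t : Σ X : Sig, (X ⟶ v) => (⟨p.obj t.1, p.map t.2⟩ : Σ X : Lam, (X ⟶ p.obj v))))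

/-- unique lift of a morphism with prescribed source -/
noncomputable def srcLift (x : Sig) (z : Σ w : Lam, (p.obj x ⟶ w)) : Σ y : Sig, (x ⟶ y) :=
  Function.surjInv (hsource x).2 z

lemma srcLift_spec (x : Sig) (z : Σ w : Lam, (p.obj x ⟶ w)) :
    (⟨p.obj (srcLift p hsource x z).1, p.map (srcLift p hsource x z).2⟩ :
      Σ w : Lam, (p.obj x ⟶ w)) = z :=
  Function.surjInv_eq (hsource x).2 z

lemma srcLift_eq (x : Sig) (z : Σ w : Lam, (p.obj x ⟶ w)) (y : Sig) (ℓ : x ⟶ y)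
    (h : (⟨p.obj y, p.map ℓ⟩ : Σ w : Lam, (p.obj x ⟶ w)) = z) :
    srcLift p hsource x z = ⟨y, ℓ⟩ :=
  (hsource x).1 ((srcLift_spec p hsource x z).trans h.symm)

/-- unique lift of a morphism with prescribed target -/
noncomputable def tgtLift (y : Sig) (z : Σ w : Lam, (w ⟶ p.obj y)) : Σ x : Sig, (x ⟶ y) :=
  Function.surjInv (htarget y).2 z

lemma tgtLift_spec (y : Sig) (z : Σ w : Lam, (w ⟶ p.obj y)) :
    (⟨p.obj (tgtLift p htarget y z).1, p.map (tgtLift p htarget y z).2⟩ :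
      Σ w : Lam, (w ⟶ p.obj y)) = z :=
  Function.surjInv_eq (htarget y).2 z

lemma tgtLift_eq (y : Sig) (z : Σ w : Lam, (w ⟶ p.obj y)) (x : Sig) (ℓ : x ⟶ y)
    (h : (⟨p.obj x, p.map ℓ⟩ : Σ w : Lam, (w ⟶ p.obj y)) = z) :
    tgtLift p htarget y z = ⟨x, ℓ⟩ :=
  (htarget y).1 ((tgtLift_spec p htarget y z).trans h.symm)

/-- composing lift specifications -/
lemma comp_spec {x y z : Sig} {w' w'' : Lam} (ℓ : x ⟶ y) (m : y ⟶ z)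
    (φ : p.obj x ⟶ w') (g : w' ⟶ w'')
    (h₁ : (⟨p.obj y, p.map ℓ⟩ : Σ w : Lam, (p.obj x ⟶ w)) = ⟨w', φ⟩)
    (hy : p.obj y = w')
    (h₂ : (⟨p.obj z, p.map m⟩ : Σ w : Lam, (p.obj y ⟶ w)) = ⟨w'', eqToHom hy ≫ g⟩) :
    (⟨p.obj z, p.map (ℓ ≫ m)⟩ : Σ w : Lam, (p.obj x ⟶ w)) = ⟨w'', φ ≫ g⟩ := by
  subst hy
  obtain ⟨-, h₁⟩ := Sigma.mk.inj_iff.mp h₁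
  obtain ⟨hz, h₂⟩ := Sigma.mk.inj_iff.mp h₂
  subst hz
  rw [p.map_comp, eq_of_heq h₁, eq_of_heq h₂]
  simp

lemma flip_spec {x y : Sig} {w' : Lam} (ℓ : x ⟶ y) (φ : p.obj x ⟶ w')
    (h : (⟨p.obj y, p.map ℓ⟩ : Σ w : Lam, (p.obj x ⟶ w)) = ⟨w', φ⟩) (hy : p.obj y = w') :
    (⟨p.obj x, p.map ℓ⟩ : Σ w : Lam, (w ⟶ p.obj y)) = ⟨p.obj x, φ ≫ eqToHom hy.symm⟩ := by
  subst hy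
  obtain ⟨-, h⟩ := Sigma.mk.inj_iff.mp h
  rw [eq_of_heq h]
  simp

lemma flip_spec' {x y : Sig} {w : Lam} (ℓ : x ⟶ y) (φ : w ⟶ p.obj y)
    (h : (⟨p.obj x, p.map ℓ⟩ : Σ w' : Lam, (w' ⟶ p.obj y)) = ⟨w, φ⟩) (hx : p.obj x = w) :
    (⟨p.obj y, p.map ℓ⟩ : Σ w' : Lam, (p.obj x ⟶ w')) = ⟨p.obj y, eqToHom hx ≫ φ⟩ := by
  subst hx
  obtain ⟨-, h⟩ := Sigma.mk.inj_iff.mp h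
  rw [eq_of_heq h]
  simp

lemma mkEqS {w : Lam} {u₀ x : Sig} {t t' : Σ y : Sig, (x ⟶ y)} (h : t = t')
    (h₁ : p.obj t.1 = w) (h₁' : p.obj t'.1 = w)
    (γ : (⊤ : MorphismProperty Sig).Q.obj u₀ ⟶ (⊤ : MorphismProperty Sig).Q.obj x) :
    (⟨⟨t.1, h₁⟩, γ ≫ (⊤ : MorphismProperty Sig).Q.map t.2⟩ :
        Σ y : {y : Sig // p.obj y = w},
          ((⊤ : MorphismProperty Sig).Q.obj u₀ ⟶ (⊤ : MorphismProperty Sig).Q.obj y.1)) =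
      ⟨⟨t'.1, h₁'⟩, γ ≫ (⊤ : MorphismProperty Sig).Q.map t'.2⟩ := by
  subst h; rfl

lemma mkEqT {w : Lam} {u₀ y : Sig} {t t' : Σ x : Sig, (x ⟶ y)} (h : t = t')
    (h₁ : p.obj t.1 = w) (h₁' : p.obj t'.1 = w)
    (δ : (⊤ : MorphismProperty Sig).Q.obj u₀ ⟶ (⊤ : MorphismProperty Sig).Q.obj y) :
    (⟨⟨t.1, h₁⟩, δ ≫ inv ((⊤ : MorphismProperty Sig).Q.map t.2)⟩ :
        Σ x : {x : Sig // p.obj x = w},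
          ((⊤ : MorphismProperty Sig).Q.obj u₀ ⟶ (⊤ : MorphismProperty Sig).Q.obj x.1)) =
      ⟨⟨t'.1, h₁'⟩, δ ≫ inv ((⊤ : MorphismProperty Sig).Q.map t'.2)⟩ := by
  subst h; rfl

/-- The fiber-and-path functor. -/
noncomputable def fib (u₀ : Sig) : Lam ⥤ Type where
  obj w := Σ x : {x : Sig // p.obj x = w},
    ((⊤ : MorphismProperty Sig).Q.obj u₀ ⟶ (⊤ : MorphismProperty Sig).Q.obj x.1)
  map {w w'} f := TypeCat.ofHom fun a =>
    ⟨⟨(srcLift p hsource a.1.1 ⟨w', eqToHom a.1.2 ≫ f⟩).1,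
      congrArg Sigma.fst (srcLift_spec p hsource a.1.1 ⟨w', eqToHom a.1.2 ≫ f⟩)⟩,
      a.2 ≫ (⊤ : MorphismProperty Sig).Q.map
        (srcLift p hsource a.1.1 ⟨w', eqToHom a.1.2 ≫ f⟩).2⟩
  map_id w := by
    refine ConcreteCategory.hom_ext _ _ fun a => ?_
    obtain ⟨⟨x, rfl⟩, γ⟩ := a
    dsimp only [TypeCat.ofHom_apply, types_id_apply]
    have hL : srcLift p hsource x ⟨p.obj x, eqToHom rfl ≫ 𝟙 (p.obj x)⟩ = ⟨x, 𝟙 x⟩ :=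
      srcLift_eq p hsource x _ x (𝟙 x) (by simp)
    refine (mkEqS p hL _ rfl γ).trans ?_
    simp
  map_comp {w w' w''} f g := by
    refine ConcreteCategory.hom_ext _ _ fun a => ?_
    obtain ⟨⟨x, rfl⟩, γ⟩ := a
    dsimp only [types_comp_apply, TypeCat.ofHom_apply]
    have hs₁ := srcLift_spec p hsource x ⟨w', eqToHom rfl ≫ f⟩
    have hs₂ := srcLift_spec p hsource (srcLift p hsource x ⟨w', eqToHom rfl ≫ f⟩).1
      ⟨w'', eqToHom (congrArg Sigma.fst hs₁) ≫ g⟩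
    have key : srcLift p hsource x ⟨w'', eqToHom rfl ≫ (f ≫ g)⟩ =
        ⟨(srcLift p hsource (srcLift p hsource x ⟨w', eqToHom rfl ≫ f⟩).1
            ⟨w'', eqToHom (congrArg Sigma.fst hs₁) ≫ g⟩).1,
          (srcLift p hsource x ⟨w', eqToHom rfl ≫ f⟩).2 ≫
          (srcLift p hsource (srcLift p hsource x ⟨w', eqToHom rfl ≫ f⟩).1
            ⟨w'', eqToHom (congrArg Sigma.fst hs₁) ≫ g⟩).2⟩ := by
      apply srcLift_eq
      refine (comp_spec p _ _ _ g hs₁ (congrArg Sigma.fst hs₁) hs₂).trans ?_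
      simp
    refine (mkEqS p key _ (congrArg Sigma.fst hs₂) γ).trans ?_
    simp

include htarget in
lemma fib_inverts (u₀ : Sig) :
    (⊤ : MorphismProperty Lam).IsInvertedBy (fib p hsource u₀) := by
  intro w w' f _
  refine ⟨⟨TypeCat.ofHom fun a =>
    ⟨⟨(tgtLift p htarget a.1.1 ⟨w, f ≫ eqToHom a.1.2.symm⟩).1,
      congrArg Sigma.fst (tgtLift_spec p htarget a.1.1 ⟨w, f ≫ eqToHom a.1.2.symm⟩)⟩,
      a.2 ≫ inv ((⊤ : MorphismProperty Sig).Q.map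
        (tgtLift p htarget a.1.1 ⟨w, f ≫ eqToHom a.1.2.symm⟩).2)⟩, ?_, ?_⟩⟩
  · ext a
    obtain ⟨⟨x, rfl⟩, γ⟩ := a
    dsimp only [fib, types_comp_apply, types_id_apply]
    have hs₁ := srcLift_spec p hsource x ⟨w', eqToHom rfl ≫ f⟩
    have key : tgtLift p htarget (srcLift p hsource x ⟨w', eqToHom rfl ≫ f⟩).1
        ⟨p.obj x, f ≫ eqToHom (congrArg Sigma.fst hs₁).symm⟩ =
        ⟨x, (srcLift p hsource x ⟨w', eqToHom rfl ≫ f⟩).2⟩ := by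
      apply tgtLift_eq
      refine (flip_spec p _ _ hs₁ (congrArg Sigma.fst hs₁)).trans ?_
      congr 1
      simp
    refine (mkEqT p key _ rfl (γ ≫ (⊤ : MorphismProperty Sig).Q.map
      (srcLift p hsource x ⟨w', eqToHom rfl ≫ f⟩).2)).trans ?_
    simp
  · ext a
    obtain ⟨⟨y, rfl⟩, δ⟩ := a
    dsimp only [fib, types_comp_apply, types_id_apply]
    have ht₁ := tgtLift_spec p htarget y ⟨w, f ≫ eqToHom (rfl : p.obj y = p.obj y).symm⟩
    have key : srcLift p hsource (tgtLift p htarget y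
          ⟨w, f ≫ eqToHom (rfl : p.obj y = p.obj y).symm⟩).1
        ⟨p.obj y, eqToHom (congrArg Sigma.fst ht₁) ≫ f⟩ =
        ⟨y, (tgtLift p htarget y ⟨w, f ≫ eqToHom (rfl : p.obj y = p.obj y).symm⟩).2⟩ := by
      apply srcLift_eq
      refine (flip_spec' p _ _ ht₁ (congrArg Sigma.fst ht₁)).trans ?_
      congr 1
      simp
    refine (mkEqS p key _ rfl (δ ≫ inv ((⊤ : MorphismProperty Sig).Q.map
      (tgtLift p htarget y ⟨w, f ≫ eqToHom (rfl : p.obj y = p.obj y).symm⟩).2))).trans ?_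
    simp

end Aux

lemma final_step {C : Type} [SmallCategory C]
    (hS : InjectiveOnMorphisms (⊤ : MorphismProperty C).Q)
    {u₀ yf yg : C} (lf : u₀ ⟶ yf) (lg : u₀ ⟶ yg) (hy : yf = yg)
    (h2 : HEq ((⊤ : MorphismProperty C).Q.map lf) ((⊤ : MorphismProperty C).Q.map lg)) :
    (⟨yf, lf⟩ : Σ y : C, (u₀ ⟶ y)) = ⟨yg, lg⟩ := by
  subst hy
  have h3 := hS (a₁ := ⟨u₀, yf, lf⟩) (a₂ := ⟨u₀, yf, lg⟩) (by dsimp only; rw [eq_of_heq h2])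
  obtain ⟨-, h4⟩ := Sigma.mk.inj_iff.mp h3
  obtain ⟨-, h5⟩ := Sigma.mk.inj_iff.mp (eq_of_heq h4)
  rw [eq_of_heq h5]


/-- for a covering `p : Σ ⥤ Λ` of connected `k`-graphs, `Λ` embeds in its
fundamental groupoid if and only if `Σ` embeds in its fundamental groupoid. -/
theorem covering_embeds_iff (k : ℕ) (Sig Lam : Type) [SmallCategory Sig] [SmallCategory Lam]
    (SS : KGraph k Sig) (SL : KGraph k Lam)
    (hconnS : IsConnectedKGraph Sig) (hconnL : IsConnectedKGraph Lam)
    (p : Sig ⥤ Lam)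
    (hdeg : ∀ {X Y : Sig} (f : X ⟶ Y), SL.d (p.map f) = SS.d f)
    (hsurj : Function.Surjective p.obj)
    (hsource : ∀ v : Sig, Function.Bijective
      (fun t : Σ Y : Sig, (v ⟶ Y) => (⟨p.obj t.1, p.map t.2⟩ : Σ Y : Lam, (p.obj v ⟶ Y))))
    (htarget : ∀ v : Sig, Function.Bijective
      (fun t : Σ X : Sig, (X ⟶ v) => (⟨p.obj t.1, p.map t.2⟩ : Σ X : Lam, (X ⟶ p.obj v)))) :
    InjectiveOnMorphisms (⊤ : MorphismProperty Lam).Q ↔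
      InjectiveOnMorphisms (⊤ : MorphismProperty Sig).Q := by
  constructor
  · -- easy direction
    intro hL
    rintro ⟨X, Y, f⟩ ⟨X', Y', g⟩ h
    dsimp only at h
    obtain ⟨h1, h2⟩ := Sigma.mk.inj_iff.mp h
    have hX : X = X' := congrArg
      (fun T : (⊤ : MorphismProperty Sig).Localization => T.as.obj) h1
    subst hX
    obtain ⟨h3, h4⟩ := Sigma.mk.inj_iff.mp (eq_of_heq h2)
    have hY : Y = Y' := congrArg
      (fun T : (⊤ : MorphismProperty Sig).Localization => T.as.obj) h3
    subst hY
    have hfg : (⊤ : MorphismProperty Sig).Q.map f = (⊤ : MorphismProperty Sig).Q.map g :=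
      eq_of_heq h4
    suffices hfg2 : f = g by rw [hfg2]
    have hinv : (⊤ : MorphismProperty Sig).IsInvertedBy (p ⋙ (⊤ : MorphismProperty Lam).Q) :=
      fun _ _ ℓ _ => QisIso (p.map ℓ)
    have hfac := Localization.Construction.fac _ hinv
    have hf' := Functor.congr_hom hfac f
    have hg' := Functor.congr_hom hfac g
    have hpf : (⊤ : MorphismProperty Lam).Q.map (p.map f) =
        (⊤ : MorphismProperty Lam).Q.map (p.map g) := by
      have heq2 : ((⊤ : MorphismProperty Sig).Q ⋙ Localization.Construction.lift _ hinv).map f =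
          ((⊤ : MorphismProperty Sig).Q ⋙ Localization.Construction.lift _ hinv).map g := by
        dsimp only [Functor.comp_map]
        rw [hfg]
      rw [hf', hg'] at heq2
      have heq3 := (cancel_epi (eqToHom (Functor.congr_obj hfac X))).mp heq2
      exact (cancel_mono (eqToHom (Functor.congr_obj hfac Y).symm)).mp heq3
    have h5 := hL (a₁ := ⟨p.obj X, p.obj Y, p.map f⟩) (a₂ := ⟨p.obj X, p.obj Y, p.map g⟩)
      (by dsimp only; rw [hpf])
    obtain ⟨-, h6⟩ := Sigma.mk.inj_iff.mp h5
    obtain ⟨-, h7⟩ := Sigma.mk.inj_iff.mp (eq_of_heq h6)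
    have h8 := (hsource X).1 (a₁ := ⟨Y, f⟩) (a₂ := ⟨Y, g⟩)
      (by dsimp only; rw [eq_of_heq h7])
    obtain ⟨-, h9⟩ := Sigma.mk.inj_iff.mp h8
    exact eq_of_heq h9
  · -- hard direction
    intro hS
    rintro ⟨u, v, f⟩ ⟨u', v', g⟩ h
    dsimp only at h
    obtain ⟨h1, h2⟩ := Sigma.mk.inj_iff.mp h
    have hu : u = u' := congrArg
      (fun T : (⊤ : MorphismProperty Lam).Localization => T.as.obj) h1
    subst hu
    obtain ⟨h3, h4⟩ := Sigma.mk.inj_iff.mp (eq_of_heq h2)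
    have hv : v = v' := congrArg
      (fun T : (⊤ : MorphismProperty Lam).Localization => T.as.obj) h3
    subst hv
    have hfg : (⊤ : MorphismProperty Lam).Q.map f = (⊤ : MorphismProperty Lam).Q.map g :=
      eq_of_heq h4
    suffices hfg2 : f = g by rw [hfg2]
    obtain ⟨u₀, hu₀⟩ := hsurj u
    subst hu₀
    have hfac := Localization.Construction.fac (fib p hsource u₀)
      (fib_inverts p hsource htarget u₀)
    have hMfg : (fib p hsource u₀).map f = (fib p hsource u₀).map g := by
      have hf' := Functor.congr_hom hfac f
      have hg' := Functor.congr_hom hfac g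
      have heq2 : ((⊤ : MorphismProperty Lam).Q ⋙
            Localization.Construction.lift _ (fib_inverts p hsource htarget u₀)).map f =
          ((⊤ : MorphismProperty Lam).Q ⋙
            Localization.Construction.lift _ (fib_inverts p hsource htarget u₀)).map g := by
        dsimp only [Functor.comp_map]
        rw [hfg]
      rw [hf', hg'] at heq2
      have heq3 := (cancel_epi (eqToHom (Functor.congr_obj hfac (p.obj u₀)))).mp heq2
      exact (cancel_mono (eqToHom (Functor.congr_obj hfac v).symm)).mp heq3
    have H := types_congr_hom hMfg
      (⟨⟨u₀, rfl⟩, 𝟙 ((⊤ : MorphismProperty Sig).Q.obj u₀)⟩ : (fib p hsource u₀).obj (p.obj u₀))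
    dsimp only [fib] at H
    obtain ⟨h5, h6⟩ := Sigma.mk.inj_iff.mp H
    have hy : (srcLift p hsource u₀ ⟨v, eqToHom rfl ≫ f⟩).1 =
        (srcLift p hsource u₀ ⟨v, eqToHom rfl ≫ g⟩).1 := congrArg Subtype.val h5
    simp only [Category.id_comp] at h6
    have hT : srcLift p hsource u₀ ⟨v, eqToHom rfl ≫ f⟩ =
        srcLift p hsource u₀ ⟨v, eqToHom rfl ≫ g⟩ :=
      final_step hS _ _ hy h6
    have hzz : (⟨v, eqToHom rfl ≫ f⟩ : Σ w : Lam, (p.obj u₀ ⟶ w)) = ⟨v, eqToHom rfl ≫ g⟩ := by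
      rw [← srcLift_spec p hsource u₀ ⟨v, eqToHom rfl ≫ f⟩,
        ← srcLift_spec p hsource u₀ ⟨v, eqToHom rfl ≫ g⟩, hT]
    obtain ⟨-, h7⟩ := Sigma.mk.inj_iff.mp hzz
    have h8 := eq_of_heq h7
    simpa using h8
end

section
/- Let E be a quiver and let Λ = Paths E be its path category (the free category on E). Then the canonical localization functor i : Λ ⥤ Π(Λ), from Λ to its localization at all morphisms, is injective on morphisms. -/
open CategoryTheory

section Aux

variable {E : Type*} [Quiver E]

/-- The word (list of letters, each marked `true`) of a path. -/
def pathWord : ∀ {a b : E}, Quiver.Path a b → List ((Σ X Y : E, X ⟶ Y) × Bool)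
  | _, _, Quiver.Path.nil => []
  | _, _, Quiver.Path.cons p e => (⟨_, _, e⟩, true) :: pathWord p

lemma pathWord_all_true : ∀ {a b : E} (p : Quiver.Path a b), ∀ x ∈ pathWord p, x.2 = true
  | _, _, Quiver.Path.nil => by simp [pathWord]
  | _, _, Quiver.Path.cons p e => by
      intro x hx
      simp only [pathWord, List.mem_cons] at hx
      rcases hx with h | h
      · rw [h]
      · exact pathWord_all_true p x h

lemma pathWord_comp : ∀ {a b c : E} (p : Quiver.Path a b) (q : Quiver.Path b c),
    pathWord (p.comp q) = pathWord q ++ pathWord p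
  | _, _, _, p, Quiver.Path.nil => by simp [Quiver.Path.comp_nil, pathWord]
  | _, _, _, p, Quiver.Path.cons q e => by
      simp only [Quiver.Path.comp_cons, pathWord, List.cons_append, pathWord_comp p q]

lemma pathWord_inj : ∀ {a b : E} (p q : Quiver.Path a b),
    pathWord p = pathWord q → p = q
  | _, _, Quiver.Path.nil, Quiver.Path.nil, _ => rfl
  | _, _, Quiver.Path.nil, Quiver.Path.cons q e, h => by simp [pathWord] at h
  | _, _, Quiver.Path.cons p e, Quiver.Path.nil, h => by simp [pathWord] at h
  | _, _, Quiver.Path.cons p e, Quiver.Path.cons q f, h => by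
      simp only [pathWord, List.cons_eq_cons, Prod.mk.injEq, and_true] at h
      obtain ⟨hhd, htl⟩ := h
      obtain ⟨rfl, hs2⟩ := Sigma.mk.inj_iff.mp hhd
      obtain ⟨-, hs3⟩ := Sigma.mk.inj_iff.mp (eq_of_heq hs2)
      obtain rfl : e = f := eq_of_heq hs3
      rw [pathWord_inj p q htl]

/-- A reduction of an all-`true` word does nothing. -/
lemma red_all_true {α : Type*} {L L' : List (α × Bool)}
    (h : FreeGroup.Red L L') (hL : ∀ x ∈ L, x.2 = true) : L' = L := by
  induction h with
  | refl => rfl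
  | tail _ hstep ih =>
      exfalso
      rw [ih] at hstep
      rcases hstep with @⟨L₁, L₂, x, b⟩
      have h1 : b = true := hL (x, b) (by simp)
      have h2 : (!b) = true := hL (x, !b) (by simp)
      rw [h1] at h2
      simp at h2

variable (E)

/-- The functor from the path category to the single-object groupoid on the free group
on the arrows of `E`, sending a path to its word. -/
def toFree : Paths E ⥤ SingleObj (FreeGroup (Σ X Y : E, X ⟶ Y)) where
  obj _ := SingleObj.star _
  map p := FreeGroup.mk (pathWord p)
  map_id _ := by
    show FreeGroup.mk (pathWord Quiver.Path.nil) = 1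
    erw [pathWord.eq_1]
    exact FreeGroup.one_eq_mk.symm
  map_comp {X Y Z} p q := by
    show FreeGroup.mk (pathWord (p.comp q)) = FreeGroup.mk (pathWord q) * FreeGroup.mk (pathWord p)
    exact (congrArg FreeGroup.mk (pathWord_comp (E := E) p q)).trans FreeGroup.mul_mk.symm

end Aux

/-- the path category of any quiver (i.e. any `1`-graph) embeds in its
fundamental groupoid, the localization at all morphisms. -/
theorem paths_embeds (E : Type*) [Quiver E] :
    InjectiveOnMorphisms (⊤ : MorphismProperty (Paths E)).Q := by
  set W : MorphismProperty (Paths E) := ⊤ with hW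
  rintro ⟨X, Y, f⟩ ⟨X', Y', g⟩ h
  have hobj : ∀ Z : Paths E, W.Q.obj Z = (Localization.Construction.objEquiv W) Z := fun _ => rfl
  injection h with h1 h2
  obtain rfl : X = X' := (Localization.Construction.objEquiv W).injective (by
    rw [← hobj, ← hobj]; exact h1)
  obtain ⟨hY, hfg⟩ := Sigma.mk.inj_iff.mp (eq_of_heq h2)
  obtain rfl : Y = Y' := (Localization.Construction.objEquiv W).injective (by
    rw [← hobj, ← hobj]; exact hY)
  have hQ : W.Q.map f = W.Q.map g := eq_of_heq hfg
  -- lift to the free group groupoid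
  have hG : W.IsInvertedBy (toFree E) := fun _ _ _ _ => inferInstance
  have fac := Localization.Construction.fac (toFree E) hG
  have hf := Functor.congr_hom fac f
  have hg := Functor.congr_hom fac g
  have : (toFree E).map f = (toFree E).map g := by
    rw [Functor.comp_map] at hf hg
    rw [hQ, hg] at hf
    simpa using hf.symm
  have hmk : FreeGroup.mk (pathWord f) = FreeGroup.mk (pathWord g) := this
  rw [FreeGroup.Red.exact] at hmk
  obtain ⟨L, hfL, hgL⟩ := hmk
  have e1 := red_all_true hfL (pathWord_all_true f)
  have e2 := red_all_true hgL (pathWord_all_true g)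
  obtain rfl : f = g := pathWord_inj f g (e1.symm.trans e2)
  rfl
end

section
/- Let k, ℓ be natural numbers, let Λ be a k-graph and Γ an ℓ-graph. Suppose the canonical localization functors i_Λ : Λ ⥤ Π(Λ) and i_Γ : Γ ⥤ Π(Γ) are both injective on morphisms. Then the canonical localization functor of the product category Λ × Γ (a (k+ℓ)-graph with degree map d(f, g) = (d_Λ(f), d_Γ(g))) at all morphisms is injective on morphisms. -/
open CategoryTheory

lemma inj_of_comp {C D E : Type*} [Category C] [Category D] [Category E]
    (F : C ⥤ D) (G : D ⥤ E) (h : InjectiveOnMorphisms (F ⋙ G)) :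
    InjectiveOnMorphisms F := by
  intro t1 t2 ht
  exact h (congrArg
    (fun t : Σ X Y : D, X ⟶ Y => (⟨G.obj t.1, G.obj t.2.1, G.map t.2.2⟩ : Σ X Y : E, X ⟶ Y)) ht)

lemma inj_prod {C C' D D' : Type*} [Category C] [Category C'] [Category D] [Category D']
    (F : C ⥤ D) (G : C' ⥤ D') (hF : InjectiveOnMorphisms F) (hG : InjectiveOnMorphisms G) :
    InjectiveOnMorphisms (F.prod G) := by
  rintro ⟨⟨X1, Y1⟩, ⟨Z1, W1⟩, f1, g1⟩ ⟨⟨X2, Y2⟩, ⟨Z2, W2⟩, f2, g2⟩ h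
  have e1 : (⟨X1, Z1, f1⟩ : Σ X Y : C, X ⟶ Y) = ⟨X2, Z2, f2⟩ := by
    apply hF
    exact congrArg (fun t : Σ X Y : D × D', X ⟶ Y =>
      (⟨t.1.1, t.2.1.1, t.2.2.1⟩ : Σ X Y : D, X ⟶ Y)) h
  have e2 : (⟨Y1, W1, g1⟩ : Σ X Y : C', X ⟶ Y) = ⟨Y2, W2, g2⟩ := by
    apply hG
    exact congrArg (fun t : Σ X Y : D × D', X ⟶ Y =>
      (⟨t.1.2, t.2.1.2, t.2.2.2⟩ : Σ X Y : D', X ⟶ Y)) h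
  obtain ⟨rfl, e1'⟩ := Sigma.mk.inj_iff.mp e1
  obtain ⟨rfl, e1''⟩ := Sigma.mk.inj_iff.mp (eq_of_heq e1')
  obtain ⟨rfl, e2'⟩ := Sigma.mk.inj_iff.mp e2
  obtain ⟨rfl, e2''⟩ := Sigma.mk.inj_iff.mp (eq_of_heq e2')
  rw [eq_of_heq e1'', eq_of_heq e2'']

/-- if a `k`-graph `Λ` and an `ℓ`-graph `Γ` both embed in their fundamental
groupoids, then so does the product category `Λ × Γ` (which is a `(k+ℓ)`-graph with
degree map `d (f, g) = (d_Λ f, d_Γ g)`). -/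
theorem product_embeds (k l : ℕ) (Lam Gam : Type) [SmallCategory Lam] [SmallCategory Gam]
    (SL : KGraph k Lam) (SG : KGraph l Gam)
    (hL : InjectiveOnMorphisms (⊤ : MorphismProperty Lam).Q)
    (hG : InjectiveOnMorphisms (⊤ : MorphismProperty Gam).Q) :
    InjectiveOnMorphisms (⊤ : MorphismProperty (Lam × Gam)).Q := by
  set F := (⊤ : MorphismProperty Lam).Q.prod (⊤ : MorphismProperty Gam).Q
  have hinv : (⊤ : MorphismProperty (Lam × Gam)).IsInvertedBy F := by
    rintro ⟨X1, X2⟩ ⟨Y1, Y2⟩ ⟨f1, f2⟩ _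
    rw [CategoryTheory.isIso_prod_iff]
    exact ⟨(⊤ : MorphismProperty Lam).Q_inverts f1 trivial,
      (⊤ : MorphismProperty Gam).Q_inverts f2 trivial⟩
  have hfac := Localization.Construction.fac F hinv
  have hF : InjectiveOnMorphisms F := inj_prod _ _ hL hG
  rw [← hfac] at hF
  exact inj_of_comp _ _ hF
end

section
/- Let k be a natural number and let Γ be a singly connected k-graph. If x and y are infinite paths in Γ with x(0) = y(0), and p, q ∈ ℕ^k satisfy σ^p x = σ^q y, then p = q and x = y. -/
open CategoryTheory

/-- An infinite path in a `k`-graph `Γ`: a (degree-preserving) functor from the opposite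
of the poset category `(Fin k → ℕ, ≤)` to `Γ`, given concretely by its action `vertex`
on objects and `edge` on morphisms.  The morphism assigned to a pair `m ≤ n` goes
`vertex n ⟶ vertex m` and has degree `n - m`. -/
structure InfPath {k : ℕ} {Γ : Type} [SmallCategory Γ] (S : KGraph k Γ) where
  vertex : (Fin k → ℕ) → Γ
  edge : ∀ m n : Fin k → ℕ, m ≤ n → (vertex n ⟶ vertex m)
  edge_refl : ∀ n, edge n n le_rfl = 𝟙 (vertex n)
  edge_comp : ∀ (m n p : Fin k → ℕ) (h₁ : m ≤ n) (h₂ : n ≤ p),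
    edge m p (h₁.trans h₂) = edge n p h₂ ≫ edge m n h₁
  deg : ∀ (m n : Fin k → ℕ) (h : m ≤ n), S.d (edge m n h) = n - m

namespace InfPath

variable {k : ℕ} {Γ : Type} [SmallCategory Γ] {S : KGraph k Γ}

/-- The shift `σ^p x` of an infinite path `x`: precomposition with translation by `p`. -/
def shift (p : Fin k → ℕ) (x : InfPath S) : InfPath S where
  vertex n := x.vertex (n + p)
  edge m n h := x.edge (m + p) (n + p) (add_le_add_left h p)
  edge_refl n := x.edge_refl (n + p)
  edge_comp m n q h₁ h₂ := x.edge_comp (m + p) (n + p) (q + p) _ _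
  deg m n h := by
    rw [x.deg]
    funext i
    simp [Nat.add_sub_add_right]

end InfPath


section Aux

variable {k : ℕ} {Γ : Type} [SmallCategory Γ] {S : KGraph k Γ}

lemma d_eqToHom {A B : Γ} (e : A = B) : S.d (eqToHom e) = 0 := by
  subst e; simpa using S.d_id A

lemma d_congr (hsc : ∀ X Y : Γ, Subsingleton (X ⟶ Y))
    {A B A' B' : Γ} (f : A ⟶ B) (g : A' ⟶ B') (hA : A = A') (hB : B = B') :
    S.d f = S.d g := by
  subst hA; subst hB
  exact congrArg S.d ((hsc _ _).elim f g)

lemma InfPath.ext' (hsc : ∀ X Y : Γ, Subsingleton (X ⟶ Y))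
    (x y : InfPath S) (hv : x.vertex = y.vertex) : x = y := by
  cases x; cases y
  simp only at hv
  subst hv
  congr 1
  funext m n hmn
  exact (hsc _ _).elim _ _

end Aux

/-- in a singly connected `k`-graph, if two infinite paths start at the
same vertex and have a common shift, then they are equal and the shifts agree. -/
theorem eq_of_shift_eq_of_singlyConnected (k : ℕ) (Γ : Type) [SmallCategory Γ]
    (S : KGraph k Γ) (hsc : ∀ X Y : Γ, Subsingleton (X ⟶ Y))
    (x y : InfPath S) (h0 : x.vertex 0 = y.vertex 0)
    (p q : Fin k → ℕ) (h : x.shift p = y.shift q) :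
    p = q ∧ x = y := by
  have hz : ∀ n : Fin k → ℕ, (0 : Fin k → ℕ) ≤ n := fun n i => Nat.zero_le _
  have hvp : x.vertex p = y.vertex q := by
    have := congrArg (fun z : InfPath S => z.vertex 0) h
    simpa [InfPath.shift] using this
  have hpq : p = q := by
    have hd := d_congr (S := S) hsc (x.edge 0 p (hz p)) (y.edge 0 q (hz q)) hvp h0
    rw [x.deg, y.deg] at hd
    funext i
    have := congrFun hd i
    simpa [InfPath.shift] using this
  subst hpq
  refine ⟨rfl, InfPath.ext' hsc x y ?_⟩
  funext n
  -- vertices of the shifts agree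
  have hvn : x.vertex (n + p) = y.vertex (n + p) := by
    have := congrArg (fun z : InfPath S => z.vertex n) h
    simpa [InfPath.shift] using this
  have hle1 : n ≤ n + p := fun i => Nat.le_add_right _ _
  set f := x.edge 0 (n + p) (hz _) with hf
  have hdf : S.d f = p + n := by
    rw [x.deg]; funext i; simp [Nat.add_comm]
  obtain ⟨t, ht, huniq⟩ := S.factorisation f p n hdf
  have hx : (⟨x.vertex n, x.edge n (n + p) hle1, x.edge 0 n (hz n)⟩ :
      Σ Y : Γ, (x.vertex (n + p) ⟶ Y) × (Y ⟶ x.vertex 0)) = t := by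
    apply huniq
    refine ⟨?_, ?_, ?_⟩
    · rw [x.deg]; funext i; simp
    · rw [x.deg]; funext i; simp
    · exact (x.edge_comp 0 n (n + p) (hz n) hle1).symm
  have hy : (⟨y.vertex n, eqToHom hvn ≫ y.edge n (n + p) hle1,
      y.edge 0 n (hz n) ≫ eqToHom h0.symm⟩ :
      Σ Y : Γ, (x.vertex (n + p) ⟶ Y) × (Y ⟶ x.vertex 0)) = t := by
    apply huniq
    refine ⟨?_, ?_, ?_⟩
    · rw [S.d_comp, d_eqToHom, y.deg]; funext i; simp
    · rw [S.d_comp, d_eqToHom, y.deg]; funext i; simp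
    · exact (hsc _ _).elim _ _
  have := hx.trans hy.symm
  exact congrArg Sigma.fst this
end

section
/- Let Γ_𝒯 be the A₂-tilde group of a finite projective plane (P, L) with bijection σ : P ≃ L and compatible triella 𝒯. For every w ∈ Γ_𝒯: (1) there exists a unique pair of lists (xs, ys) over P forming a right normal form of w; (2) there exists a unique pair of lists (ts, ss) over P with w = a_{t₁}⁻¹⋯a_{t_n}⁻¹·a_{s₁}⋯a_{s_m}, s_{i+1} ∉ σ(s_i) for consecutive entries of ss, t_j ∉ σ(t_{j+1}) for consecutive entries of ts, and the last entry of ts distinct from the first entry of ss when both lists are nonempty (the left normal form); moreover ss has the same length m as xs and ts has the same length n as ys; (3) every list l of letters from {a_x, a_x⁻¹ : x ∈ P} whose product is w has length at least m + n, and if its length equals m + n then it contains exactly m generator letters and n inverse letters. -/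
/-- The relations of the A₂-tilde group: `a_x a_y a_z = 1` for `(x, y, z) ∈ T`. -/
def A2Rels {P : Type} (T : Set (P × P × P)) : Set (FreeGroup P) :=
  (fun t : P × P × P => FreeGroup.of t.1 * FreeGroup.of t.2.1 * FreeGroup.of t.2.2) '' T

/-- The A₂-tilde group associated to a triella `T`. -/
abbrev A2TildeGroup {P : Type} (T : Set (P × P × P)) : Type := PresentedGroup (A2Rels T)

/-- The generator `a_x` of the A₂-tilde group. -/
def a {P : Type} (T : Set (P × P × P)) (x : P) : A2TildeGroup T := PresentedGroup.of x

/-- `(xs, ys)` is a right normal form of `w`: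
`w = a_{x₁} ⋯ a_{x_m} · a_{y₁}⁻¹ ⋯ a_{y_n}⁻¹` with `x_{i+1} ∉ σ x_i`, `y_j ∉ σ y_{j+1}`,
and `x_m ≠ y₁` when both lists are nonempty. -/
def IsRNF {P L : Type} [Membership P L] (σ : P ≃ L) (T : Set (P × P × P))
    (w : A2TildeGroup T) (xs ys : List P) : Prop :=
  w = (xs.map fun x => a T x).prod * (ys.map fun y => (a T y)⁻¹).prod ∧
  List.Chain' (fun p q => q ∉ σ p) xs ∧
  List.Chain' (fun p q => p ∉ σ q) ys ∧
  (∀ x ∈ xs.getLast?, ∀ y ∈ ys.head?, x ≠ y)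

/-- `(ts, ss)` is a left normal form of `w`:
`w = a_{t₁}⁻¹ ⋯ a_{t_n}⁻¹ · a_{s₁} ⋯ a_{s_m}` with `s_{i+1} ∉ σ s_i`, `t_j ∉ σ t_{j+1}`,
and the last entry of `ts` distinct from the first entry of `ss` when both are
nonempty. -/
def IsLNF {P L : Type} [Membership P L] (σ : P ≃ L) (T : Set (P × P × P))
    (w : A2TildeGroup T) (ts ss : List P) : Prop :=
  w = (ts.map fun t => (a T t)⁻¹).prod * (ss.map fun s => a T s).prod ∧
  List.Chain' (fun p q => q ∉ σ p) ss ∧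
  List.Chain' (fun p q => p ∉ σ q) ts ∧
  (∀ t ∈ ts.getLast?, ∀ s ∈ ss.head?, t ≠ s)

/-- The evaluation of a letter: `(x, true)` is the generator `a_x` and `(x, false)` its
inverse. -/
def letterEval {P : Type} (T : Set (P × P × P)) (pb : P × Bool) : A2TildeGroup T :=
  if pb.2 then a T pb.1 else (a T pb.1)⁻¹

namespace A2NFAux

variable {P : Type}

abbrev Word (P : Type) := List (P × Bool)

/-- inversion count: number of pairs (i<j) with l_i negative, l_j positive -/
def inv : Word P → ℕ
  | [] => 0
  | pb :: t => (if pb.2 then 0 else t.countP (fun q => q.2)) + inv t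

lemma inv_append (l₁ l₂ : Word P) :
    inv (l₁ ++ l₂) = inv l₁ + inv l₂ +
      (l₁.countP (fun q => !q.2)) * (l₂.countP (fun q => q.2)) := by
  induction l₁ with
  | nil => simp [inv]
  | cons pb t ih =>
      rcases pb with ⟨x, b⟩
      cases b <;> simp [inv, ih, List.countP_append, List.countP_cons] <;> ring

lemma inv_le_sq (l : Word P) : inv l ≤ l.length * l.length := by
  induction l with
  | nil => simp [inv]
  | cons pb t ih =>
      have h1 : t.countP (fun q => q.2) ≤ t.length := List.countP_le_length
      have h2 : inv (pb :: t) ≤ t.length + inv t := by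
        cases hb : pb.2 <;> simp [inv, hb] <;> omega
      have h3 : (pb :: t).length * (pb :: t).length
          = t.length * t.length + (2 * t.length + 1) := by
        simp [List.length_cons]; ring
      omega

/-- single措置 measure -/
def nu (l : Word P) : ℕ := l.length * l.length * l.length + inv l

section Rules

variable (T : Set (P × P × P))

inductive Rw : Word P → Word P → Prop
  | cpn (x : P) : Rw [(x, true), (x, false)] []
  | cnp (x : P) : Rw [(x, false), (x, true)] []
  | pp {x y z : P} : (x, y, z) ∈ T → Rw [(x, true), (y, true)] [(z, false)]
  | nn {p q r : P} : (q, p, r) ∈ T → Rw [(p, false), (q, false)] [(r, true)]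
  | mv {p x u v w : P} : p ≠ x → (p, u, v) ∈ T → (v, x, w) ∈ T →
      Rw [(p, false), (x, true)] [(u, true), (w, false)]

def Step (u v : Word P) : Prop :=
  ∃ c₁ c₂ s t, Rw T s t ∧ u = c₁ ++ s ++ c₂ ∧ v = c₁ ++ t ++ c₂

lemma Rw.lhs_length {s t : Word P} (h : Rw T s t) : s.length = 2 := by
  cases h <;> rfl

lemma Rw.counts {s t : Word P} (h : Rw T s t) :
    (t.length < s.length ∧ t.length + 1 ≤ 2) ∨
    (t.length = s.length ∧ inv t < inv s ∧
      t.countP (fun q => q.2) = s.countP (fun q => q.2) ∧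
      t.countP (fun q => !q.2) = s.countP (fun q => !q.2)) := by
  cases h <;> simp [inv, List.countP_cons]

lemma nu_lt_of_length_lt {u v : Word P} (h : v.length < u.length) : nu v < nu u := by
  have h2 : inv v ≤ v.length * v.length := inv_le_sq v
  have hM : v.length + 1 ≤ u.length := h
  calc nu v = v.length * v.length * v.length + inv v := rfl
    _ ≤ v.length * v.length * v.length + v.length * v.length := by omega
    _ < (v.length + 1) * (v.length + 1) * (v.length + 1) := by nlinarith
    _ ≤ u.length * u.length * u.length :=
        Nat.mul_le_mul (Nat.mul_le_mul hM hM) hM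
    _ ≤ u.length * u.length * u.length + inv u := Nat.le_add_right _ _

lemma step_nu_lt {u v : Word P} (h : Step T u v) : nu v < nu u := by
  obtain ⟨c₁, c₂, s, t, hrw, rfl, rfl⟩ := h
  have hs2 : s.length = 2 := hrw.lhs_length T
  rcases hrw.counts T with ⟨hlt, -⟩ | ⟨heq, hinv, hp, hn⟩
  · exact nu_lt_of_length_lt (by simp only [List.length_append]; omega)
  · have hlen : (c₁ ++ t ++ c₂).length = (c₁ ++ s ++ c₂).length := by
      simp only [List.length_append]; omega
    have hinv2 : inv (c₁ ++ t ++ c₂) < inv (c₁ ++ s ++ c₂) := by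
      simp only [inv_append, List.countP_append, hp, hn]
      omega
    simp only [nu, hlen]
    omega

lemma Step.length_le {u v : Word P} (h : Step T u v) : v.length ≤ u.length := by
  obtain ⟨c₁, c₂, s, t, hrw, rfl, rfl⟩ := h
  rcases hrw.counts T with ⟨hlt, -⟩ | ⟨heq, -⟩ <;> simp only [List.length_append] <;> omega

lemma Step.counts_of_length_eq {u v : Word P} (h : Step T u v) (hl : v.length = u.length) :
    v.countP (fun q => q.2) = u.countP (fun q => q.2) ∧
    v.countP (fun q => !q.2) = u.countP (fun q => !q.2) := by
  obtain ⟨c₁, c₂, s, t, hrw, rfl, rfl⟩ := h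
  rcases hrw.counts T with ⟨hlt, -⟩ | ⟨heq, hinv, hp, hn⟩
  · exfalso; simp only [List.length_append] at hl; omega
  · constructor <;> simp only [List.countP_append, hp, hn]

end Rules

open Relation

section Newman

variable {α : Type*} (r : α → α → Prop) (nu : α → ℕ)

/-- Newman's lemma, via an ℕ-valued decreasing measure. -/
lemma newman (hdec : ∀ {a b}, r a b → nu b < nu a)
    (hlc : ∀ a b c, r a b → r a c → ∃ d, ReflTransGen r b d ∧ ReflTransGen r c d) :
    ∀ a b c, ReflTransGen r a b → ReflTransGen r a c →
      ∃ d, ReflTransGen r b d ∧ ReflTransGen r c d := by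
  suffices H : ∀ N a, nu a = N → ∀ b c, ReflTransGen r a b → ReflTransGen r a c →
      ∃ d, ReflTransGen r b d ∧ ReflTransGen r c d by
    intro a; exact H (nu a) a rfl
  intro N
  induction N using Nat.strong_induction_on with
  | _ N ih =>
  rintro a rfl b c hab hac
  rcases hab.cases_head with rfl | ⟨b₁, hab₁, hb₁b⟩
  · exact ⟨c, hac, ReflTransGen.refl⟩
  rcases hac.cases_head with rfl | ⟨c₁, hac₁, hc₁c⟩
  · exact ⟨b, ReflTransGen.refl, hab⟩
  obtain ⟨d₀, hbd₀, hcd₀⟩ := hlc a b₁ c₁ hab₁ hac₁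
  obtain ⟨e, hbe, hd₀e⟩ := ih (nu b₁) (hdec hab₁) b₁ rfl b d₀ hb₁b hbd₀
  obtain ⟨f, hcf, hef⟩ := ih (nu c₁) (hdec hac₁) c₁ rfl c e hc₁c (hcd₀.trans hd₀e)
  exact ⟨f, hbe.trans hef, hcf⟩

/-- From confluence, equivalence implies joinability. -/
lemma eqvGen_join
    (hconf : ∀ a b c, ReflTransGen r a b → ReflTransGen r a c →
      ∃ d, ReflTransGen r b d ∧ ReflTransGen r c d)
    {a b : α} (h : Relation.EqvGen r a b) :
    ∃ d, ReflTransGen r a d ∧ ReflTransGen r b d := by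
  induction h with
  | rel x y hxy => exact ⟨y, ReflTransGen.single hxy, ReflTransGen.refl⟩
  | refl x => exact ⟨x, ReflTransGen.refl, ReflTransGen.refl⟩
  | symm x y _ ih => exact ⟨ih.choose, ih.choose_spec.2, ih.choose_spec.1⟩
  | trans x y z _ _ ih₁ ih₂ =>
      obtain ⟨d₁, hx, hy⟩ := ih₁
      obtain ⟨d₂, hy', hz⟩ := ih₂
      obtain ⟨e, h₁, h₂⟩ := hconf y d₁ d₂ hy hy'
      exact ⟨e, hx.trans h₁, hz.trans h₂⟩

end Newman

section Ctx

variable (T : Set (P × P × P))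

lemma step_of {s t : Word P} (h : Rw T s t) (c₁ c₂ : Word P) :
    Step T (c₁ ++ s ++ c₂) (c₁ ++ t ++ c₂) := ⟨c₁, c₂, s, t, h, rfl, rfl⟩

lemma step_head {s t : Word P} (h : Rw T s t) (c : Word P) :
    Step T (s ++ c) (t ++ c) := by
  have := step_of T h [] c; simpa using this

lemma step_tail {s t : Word P} (h : Rw T s t) (c : Word P) :
    Step T (c ++ s) (c ++ t) := by
  have := step_of T h c []; simpa using this

lemma step_exact {s t : Word P} (h : Rw T s t) : Step T s t := by
  have := step_of T h [] []; simpa using this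

lemma step_context {u v : Word P} (h : Step T u v) (c₁ c₂ : Word P) :
    Step T (c₁ ++ u ++ c₂) (c₁ ++ v ++ c₂) := by
  obtain ⟨d₁, d₂, s, t, hrw, rfl, rfl⟩ := h
  refine ⟨c₁ ++ d₁, d₂ ++ c₂, s, t, hrw, by simp, by simp⟩

lemma rtg_context {u v : Word P} (h : Relation.ReflTransGen (Step T) u v) (c₁ c₂ : Word P) :
    Relation.ReflTransGen (Step T) (c₁ ++ u ++ c₂) (c₁ ++ v ++ c₂) := by
  induction h with
  | refl => exact Relation.ReflTransGen.refl
  | tail _ hst ih => exact ih.tail (step_context T hst c₁ c₂)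

/-- irreducible words -/
def Irred (l : Word P) : Prop := ∀ v, ¬ Step T l v

lemma exists_irred_reduct (u : Word P) :
    ∃ n, Relation.ReflTransGen (Step T) u n ∧ Irred T n := by
  by_cases h : Irred T u
  · exact ⟨u, Relation.ReflTransGen.refl, h⟩
  · simp only [Irred, not_forall, not_not] at h
    obtain ⟨v, hv⟩ := h
    have : nu v < nu u := step_nu_lt T hv
    obtain ⟨n, hn, hirr⟩ := exists_irred_reduct v
    exact ⟨n, (Relation.ReflTransGen.single hv).trans hn, hirr⟩
termination_by nu u

lemma irred_rtg_eq {u v : Word P} (h : Irred T u)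
    (hr : Relation.ReflTransGen (Step T) u v) : v = u := by
  rcases hr.cases_head with rfl | ⟨w, hw, -⟩
  · rfl
  · exact absurd hw (h w)

end Ctx

/-- Splitting of two factorizations with middle blocks of length two. -/
lemma two_two_split {X : Type*} {c₁ c₂ d₁ d₂ s t : List X}
    (h : c₁ ++ s ++ c₂ = d₁ ++ t ++ d₂) (hs : s.length = 2) (ht : t.length = 2) :
    (c₁ = d₁ ∧ s = t ∧ c₂ = d₂)
    ∨ (∃ m, d₁ = c₁ ++ s ++ m ∧ c₂ = m ++ t ++ d₂)
    ∨ (∃ m, c₁ = d₁ ++ t ++ m ∧ d₂ = m ++ s ++ c₂)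
    ∨ (∃ α β γ, s = [α, β] ∧ t = [β, γ] ∧ d₁ = c₁ ++ [α] ∧ c₂ = γ :: d₂)
    ∨ (∃ α β γ, t = [α, β] ∧ s = [β, γ] ∧ c₁ = d₁ ++ [α] ∧ d₂ = γ :: c₂) := by
  obtain ⟨α, β, rfl⟩ : ∃ α β, s = [α, β] := by
    match s, hs with | [α, β], _ => exact ⟨α, β, rfl⟩
  obtain ⟨α', β', rfl⟩ : ∃ α β, t = [α, β] := by
    match t, ht with | [α, β], _ => exact ⟨α, β, rfl⟩
  rw [List.append_assoc, List.append_assoc, List.append_eq_append_iff] at h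
  rcases h with ⟨k, hd₁, hk⟩ | ⟨k, hc₁, hk⟩
  · rcases k with _ | ⟨e, _ | ⟨f, m⟩⟩
    · simp only [List.nil_append, List.cons_append, List.cons.injEq] at hk
      obtain ⟨rfl, rfl, heq⟩ := hk
      exact Or.inl ⟨by simpa using hd₁.symm, rfl, heq⟩
    · simp only [List.cons_append, List.nil_append, List.cons.injEq] at hk
      obtain ⟨rfl, rfl, heq⟩ := hk
      exact Or.inr (Or.inr (Or.inr (Or.inl ⟨α, β, β', rfl, rfl, by simpa using hd₁, heq⟩)))
    · simp only [List.cons_append, List.cons.injEq] at hk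
      obtain ⟨rfl, rfl, heq⟩ := hk
      refine Or.inr (Or.inl ⟨m, by simpa using hd₁, by simpa using heq⟩)
  · rcases k with _ | ⟨e, _ | ⟨f, m⟩⟩
    · simp only [List.nil_append, List.cons_append, List.cons.injEq] at hk
      obtain ⟨rfl, rfl, heq⟩ := hk
      exact Or.inl ⟨by simpa using hc₁, rfl, heq.symm⟩
    · simp only [List.cons_append, List.nil_append, List.cons.injEq] at hk
      obtain ⟨rfl, rfl, heq⟩ := hk
      exact Or.inr (Or.inr (Or.inr (Or.inr ⟨α', β', β, rfl, rfl, by simpa using hc₁, heq⟩)))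
    · simp only [List.cons_append, List.cons.injEq] at hk
      obtain ⟨rfl, rfl, heq⟩ := hk
      refine Or.inr (Or.inr (Or.inl ⟨m, by simpa using hc₁, by simpa using heq⟩))

section Confluence

variable {T : Set (P × P × P)} {R : P → P → Prop}
variable (hTR : ∀ x y : P, (∃ z, (x, y, z) ∈ T) ↔ R x y)
variable (hcyc : ∀ x y z : P, (x, y, z) ∈ T → (y, z, x) ∈ T)
variable (huniq : ∀ x y z z' : P, (x, y, z) ∈ T → (x, y, z') ∈ T → z = z')
variable (hlu : ∀ p q v v' : P, p ≠ q → R v p → R v q → R v' p → R v' q → v = v')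

include hTR in
lemma memR {x y z : P} (h : (x, y, z) ∈ T) : R x y := (hTR x y).mp ⟨z, h⟩

include hcyc in
lemma cyc2 {x y z : P} (h : (x, y, z) ∈ T) : (z, x, y) ∈ T := hcyc _ _ _ (hcyc _ _ _ h)

include hcyc huniq in
lemma uniq_mid {x y y' z : P} (h : (x, y, z) ∈ T) (h' : (x, y', z) ∈ T) : y = y' :=
  huniq z x y y' (cyc2 hcyc h) (cyc2 hcyc h')

include hcyc huniq in
lemma uniq_fst {x x' y z : P} (h : (x, y, z) ∈ T) (h' : (x', y, z) ∈ T) : x = x' :=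
  huniq y z x x' (hcyc _ _ _ h) (hcyc _ _ _ h')

include hTR hcyc huniq hlu in
lemma rw_det {s t t' : Word P} (h : Rw T s t) (h' : Rw T s t') : t = t' := by
  cases h with
  | cpn x => cases h' with | cpn _ => rfl
  | cnp x =>
      cases h' with
      | cnp _ => rfl
      | mv hne h1 h2 => exact absurd rfl hne
  | pp hxyz =>
      rename_i x y z
      cases h' with
      | pp h' => rw [huniq _ _ _ _ hxyz h']
  | nn hqpr =>
      rename_i p q r
      cases h' with
      | nn h' => rw [huniq _ _ _ _ hqpr h']
  | mv hne h1 h2 =>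
      rename_i p x u v w
      cases h' with
      | cnp => exact absurd rfl hne
      | mv hne' h1' h2' =>
          rename_i u' v' w'
          have hv : v = v' := by
            refine hlu p x v v' hne ?_ ?_ ?_ ?_
            · exact memR hTR (cyc2 hcyc h1)
            · exact memR hTR h2
            · exact memR hTR (cyc2 hcyc h1')
            · exact memR hTR h2'
          subst hv
          rw [uniq_mid hcyc huniq h1 h1', huniq _ _ _ _ h2 h2']

include hcyc huniq in
/-- The twelve critical pairs. -/
lemma cp_core {α β γ : P × Bool} {b₁ b₂ : Word P}
    (h₁ : Rw T [α, β] b₁) (h₂ : Rw T [β, γ] b₂) :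
    ∃ d, Relation.ReflTransGen (Step T) (b₁ ++ [γ]) d ∧
         Relation.ReflTransGen (Step T) ([α] ++ b₂) d := by
  cases h₁ with
  | cpn x =>
      cases h₂ with
      | cnp _ => exact ⟨[(x, true)], .refl, .refl⟩
      | nn hqxr =>
          rename_i q r
          refine ⟨[(q, false)], .refl, Relation.ReflTransGen.single ?_⟩
          simpa using step_exact T (Rw.pp (hcyc _ _ _ hqxr))
      | mv hne h1 h2 =>
          rename_i g u v w
          refine ⟨[(g, true)], .refl, ?_⟩
          have s1 : Step T [(x, true), (u, true), (w, false)] [(v, false), (w, false)] := by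
            simpa using step_head T (Rw.pp h1) [(w, false)]
          have s2 : Step T [(v, false), (w, false)] [(g, true)] := by
            simpa using step_exact T (Rw.nn (cyc2 hcyc h2))
          exact (Relation.ReflTransGen.single s1).tail s2
  | cnp x =>
      cases h₂ with
      | cpn _ => exact ⟨[(x, false)], .refl, .refl⟩
      | pp hxyz =>
          rename_i y z
          refine ⟨[(y, true)], .refl, Relation.ReflTransGen.single ?_⟩
          simpa using step_exact T (Rw.nn (cyc2 hcyc hxyz))
  | pp hxyz =>
      rename_i x y z
      cases h₂ with
      | cpn _ =>
          refine ⟨[(x, true)], Relation.ReflTransGen.single ?_, .refl⟩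
          simpa using step_exact T (Rw.nn (hcyc _ _ _ hxyz))
      | pp hycz =>
          rename_i c z₂
          by_cases hzc : z = c
          · subst hzc
            have hz₂ : z₂ = x := huniq _ _ _ _ hycz (hcyc _ _ _ hxyz)
            subst hz₂
            refine ⟨[], Relation.ReflTransGen.single ?_, Relation.ReflTransGen.single ?_⟩
            · simpa using step_exact T (Rw.cnp z)
            · simpa using step_exact T (Rw.cpn z₂)
          · refine ⟨[(x, true), (z₂, false)], Relation.ReflTransGen.single ?_, .refl⟩
            simpa using step_exact T (Rw.mv hzc (cyc2 hcyc hxyz) hycz)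
  | nn hqpr =>
      rename_i p q r
      cases h₂ with
      | cnp _ =>
          refine ⟨[(p, false)], Relation.ReflTransGen.single ?_, .refl⟩
          simpa using step_exact T (Rw.pp (cyc2 hcyc hqpr))
      | nn hgqr₂ =>
          rename_i g r₂
          by_cases hpr : p = r₂
          · subst hpr
            have : r = g := huniq _ _ _ _ hqpr (hcyc _ _ _ hgqr₂)
            subst this
            refine ⟨[], Relation.ReflTransGen.single ?_, Relation.ReflTransGen.single ?_⟩
            · simpa using step_exact T (Rw.cpn r)
            · simpa using step_exact T (Rw.cnp p)
          · refine ⟨[(r, true), (g, false)], .refl, Relation.ReflTransGen.single ?_⟩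
            simpa using step_exact T (Rw.mv hpr (hcyc _ _ _ hqpr) (hcyc _ _ _ hgqr₂))
      | mv hne h1 h2 =>
          rename_i g u v w
          by_cases hpu : p = u
          · subst hpu
            have hvr : v = r := huniq _ _ _ _ h1 hqpr
            subst hvr
            refine ⟨[(w, false)], Relation.ReflTransGen.single ?_,
              Relation.ReflTransGen.single ?_⟩
            · simpa using step_exact T (Rw.pp h2)
            · simpa using step_head T (Rw.cnp p) [(w, false)]
          · refine ⟨[(r, true), (g, true)], .refl, ?_⟩
            have s1 : Step T [(p, false), (u, true), (w, false)]
                [(r, true), (v, false), (w, false)] := by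
              simpa using step_head T (Rw.mv hpu (hcyc _ _ _ hqpr) h1) [(w, false)]
            have s2 : Step T [(r, true), (v, false), (w, false)] [(r, true), (g, true)] := by
              simpa using step_tail T (Rw.nn (cyc2 hcyc h2)) [(r, true)]
            exact (Relation.ReflTransGen.single s1).tail s2
  | mv hne h1 h2 =>
      rename_i p x u v w
      cases h₂ with
      | cpn _ =>
          refine ⟨[(p, false)], ?_, .refl⟩
          have s1 : Step T [(u, true), (w, false), (x, false)] [(u, true), (v, true)] := by
            simpa using step_tail T (Rw.nn (hcyc _ _ _ h2)) [(u, true)]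
          have s2 : Step T [(u, true), (v, true)] [(p, false)] := by
            simpa using step_exact T (Rw.pp (hcyc _ _ _ h1))
          exact (Relation.ReflTransGen.single s1).tail s2
      | pp hxyz₂ =>
          rename_i y z₂
          by_cases hwy : w = y
          · subst hwy
            have hz₂ : z₂ = v := huniq _ _ _ _ hxyz₂ (hcyc _ _ _ h2)
            subst hz₂
            refine ⟨[(u, true)], Relation.ReflTransGen.single ?_,
              Relation.ReflTransGen.single ?_⟩
            · simpa using step_tail T (Rw.cnp w) [(u, true)]
            · simpa using step_exact T (Rw.nn (cyc2 hcyc h1))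
          · refine ⟨[(p, false), (z₂, false)], ?_, .refl⟩
            have s1 : Step T [(u, true), (w, false), (y, true)]
                [(u, true), (v, true), (z₂, false)] := by
              simpa using step_tail T (Rw.mv hwy (cyc2 hcyc h2) hxyz₂) [(u, true)]
            have s2 : Step T [(u, true), (v, true), (z₂, false)] [(p, false), (z₂, false)] := by
              simpa using step_head T (Rw.pp (hcyc _ _ _ h1)) [(z₂, false)]
            exact (Relation.ReflTransGen.single s1).tail s2

include hTR hcyc huniq hlu in
lemma local_confluent (u v₁ v₂ : Word P) (h₁ : Step T u v₁) (h₂ : Step T u v₂) :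
    ∃ d, Relation.ReflTransGen (Step T) v₁ d ∧ Relation.ReflTransGen (Step T) v₂ d := by
  obtain ⟨c₁, c₂, s, t, hrw, rfl, rfl⟩ := h₁
  obtain ⟨d₁, d₂, s', t', hrw', hu, rfl⟩ := h₂
  rcases two_two_split hu (hrw.lhs_length T) (hrw'.lhs_length T) with
      ⟨rfl, rfl, rfl⟩ | ⟨m, rfl, rfl⟩ | ⟨m, rfl, rfl⟩ |
      ⟨α, β, γ, rfl, rfl, rfl, rfl⟩ | ⟨α, β, γ, rfl, rfl, rfl, rfl⟩
  · rw [rw_det hTR hcyc huniq hlu hrw hrw']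
    exact ⟨_, .refl, .refl⟩
  · refine ⟨c₁ ++ t ++ (m ++ t' ++ d₂), Relation.ReflTransGen.single ?_,
      Relation.ReflTransGen.single ?_⟩
    · have := step_of T hrw' (c₁ ++ t ++ m) d₂
      simpa [List.append_assoc] using this
    · have := step_of T hrw c₁ (m ++ t' ++ d₂)
      simpa [List.append_assoc] using this
  · refine ⟨d₁ ++ t' ++ (m ++ t ++ c₂), Relation.ReflTransGen.single ?_,
      Relation.ReflTransGen.single ?_⟩
    · have := step_of T hrw' d₁ (m ++ t ++ c₂)
      simpa [List.append_assoc] using this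
    · have := step_of T hrw (d₁ ++ t' ++ m) c₂
      simpa [List.append_assoc] using this
  · obtain ⟨d₀, hd₁, hd₂⟩ := cp_core hcyc huniq hrw hrw'
    refine ⟨c₁ ++ d₀ ++ d₂, ?_, ?_⟩
    · have := rtg_context T hd₁ c₁ d₂
      simpa [List.append_assoc] using this
    · have := rtg_context T hd₂ c₁ d₂
      simpa [List.append_assoc] using this
  · obtain ⟨d₀, hd₁, hd₂⟩ := cp_core hcyc huniq hrw' hrw
    refine ⟨d₁ ++ d₀ ++ c₂, ?_, ?_⟩
    · have := rtg_context T hd₂ d₁ c₂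
      simpa [List.append_assoc] using this
    · have := rtg_context T hd₁ d₁ c₂
      simpa [List.append_assoc] using this

include hTR hcyc huniq hlu in
lemma confluent {u v₁ v₂ : Word P} (h₁ : Relation.ReflTransGen (Step T) u v₁)
    (h₂ : Relation.ReflTransGen (Step T) u v₂) :
    ∃ d, Relation.ReflTransGen (Step T) v₁ d ∧ Relation.ReflTransGen (Step T) v₂ d :=
  newman (Step T) nu (fun h => step_nu_lt T h)
    (local_confluent hTR hcyc huniq hlu) u v₁ v₂ h₁ h₂

include hTR hcyc huniq hlu in
lemma eqv_irred_unique {u v : Word P} (h : Relation.EqvGen (Step T) u v)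
    (hu : Irred T u) (hv : Irred T v) : u = v := by
  obtain ⟨d, h₁, h₂⟩ := eqvGen_join (Step T)
    (fun a b c => confluent hTR hcyc huniq hlu) h
  rw [← irred_rtg_eq T hu h₁, ← irred_rtg_eq T hv h₂]

include hTR hcyc huniq hlu in
lemma eqv_rtg_irred {u v : Word P} (h : Relation.EqvGen (Step T) u v)
    (hv : Irred T v) : Relation.ReflTransGen (Step T) u v := by
  obtain ⟨d, h₁, h₂⟩ := eqvGen_join (Step T)
    (fun a b c => confluent hTR hcyc huniq hlu) h
  rwa [irred_rtg_eq T hv h₂] at h₁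

end Confluence

section Eval

variable (T : Set (P × P × P))

/-- evaluation of a word in the A₂-tilde group -/
def evalW (l : Word P) : A2TildeGroup T := (l.map (letterEval T)).prod

@[simp] lemma evalW_nil : evalW T [] = 1 := rfl

@[simp] lemma evalW_cons (pb : P × Bool) (l : Word P) :
    evalW T (pb :: l) = letterEval T pb * evalW T l := by
  simp [evalW]

@[simp] lemma evalW_append (l₁ l₂ : Word P) :
    evalW T (l₁ ++ l₂) = evalW T l₁ * evalW T l₂ := by
  simp [evalW]

lemma rel_one {x y z : P} (h : (x, y, z) ∈ T) : a T x * a T y * a T z = 1 := by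
  have hmem : FreeGroup.of x * FreeGroup.of y * FreeGroup.of z ∈ A2Rels T :=
    ⟨(x, y, z), h, rfl⟩
  have h1 : (PresentedGroup.mk (A2Rels T))
      (FreeGroup.of x * FreeGroup.of y * FreeGroup.of z) = 1 := by
    exact (QuotientGroup.eq_one_iff _).2 (Subgroup.subset_normalClosure hmem)
  simpa [a, PresentedGroup.of, map_mul] using h1

lemma rw_eval {s t : Word P} (h : Rw T s t) : evalW T s = evalW T t := by
  cases h with
  | cpn x => simp [letterEval]
  | cnp x => simp [letterEval]
  | pp hxyz =>
      have h1 := rel_one T hxyz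
      have h2 : a T _ * a T _ = (a T _)⁻¹ := eq_inv_of_mul_eq_one_left h1
      simp only [evalW_cons, evalW_nil, letterEval, if_pos, mul_one]
      simpa [mul_assoc] using h2
  | nn hqpr =>
      have h1 := rel_one T hqpr
      rename_i p q r
      have h2 : a T r = (a T q * a T p)⁻¹ :=
        (inv_eq_of_mul_eq_one_right (by simpa [mul_assoc] using h1)).symm
      simp only [evalW_cons, evalW_nil, letterEval, mul_one]
      simp [h2, mul_inv_rev]
  | mv hne h1 h2 =>
      rename_i p x u v w
      have e1 : (a T p)⁻¹ = a T u * a T v := by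
        rw [inv_eq_iff_mul_eq_one]; simpa [mul_assoc] using rel_one T h1
      have e2 : a T v * a T x = (a T w)⁻¹ := eq_inv_of_mul_eq_one_left (rel_one T h2)
      simp only [evalW_cons, evalW_nil, letterEval, mul_one]
      simp only [if_pos, if_neg, Bool.false_eq_true, not_false_eq_true, reduceIte]
      rw [e1, mul_assoc, e2]

lemma step_eval {u v : Word P} (h : Step T u v) : evalW T u = evalW T v := by
  obtain ⟨c₁, c₂, s, t, hrw, rfl, rfl⟩ := h
  simp [rw_eval T hrw]

lemma eqv_eval {u v : Word P} (h : Relation.EqvGen (Step T) u v) :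
    evalW T u = evalW T v := by
  induction h with
  | rel _ _ h => exact step_eval T h
  | refl _ => rfl
  | symm _ _ _ ih => exact ih.symm
  | trans _ _ _ _ _ ih₁ ih₂ => exact ih₁.trans ih₂

/-- formal inversion of a word -/
def invW (l : Word P) : Word P := (l.map fun pb => (pb.1, !pb.2)).reverse

@[simp] lemma invW_nil : invW ([] : Word P) = [] := rfl

lemma invW_append (l₁ l₂ : Word P) : invW (l₁ ++ l₂) = invW l₂ ++ invW l₁ := by
  simp [invW]

lemma invW_cons (pb : P × Bool) (l : Word P) :
    invW (pb :: l) = invW l ++ [(pb.1, !pb.2)] := by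
  simp [invW]

variable {T}

lemma rw_invW (hcyc : ∀ x y z : P, (x, y, z) ∈ T → (y, z, x) ∈ T)
    {s t : Word P} (h : Rw T s t) : Rw T (invW s) (invW t) := by
  cases h with
  | cpn x => exact Rw.cpn x
  | cnp x => exact Rw.cnp x
  | pp hxyz => exact Rw.nn hxyz
  | nn hqpr => exact Rw.pp hqpr
  | mv hne h1 h2 =>
      exact Rw.mv (Ne.symm hne) (hcyc _ _ _ h2) (cyc2 hcyc h1)

lemma step_invW (hcyc : ∀ x y z : P, (x, y, z) ∈ T → (y, z, x) ∈ T)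
    {u v : Word P} (h : Step T u v) : Step T (invW u) (invW v) := by
  obtain ⟨c₁, c₂, s, t, hrw, rfl, rfl⟩ := h
  refine ⟨invW c₂, invW c₁, invW s, invW t, rw_invW hcyc hrw, ?_, ?_⟩ <;>
    simp [invW_append, List.append_assoc]

variable (T)

/-- the quotient of words by the rewriting relation -/
abbrev WQ := Quot (Step T)

lemma rtg_mkeq {u v : Word P} (h : Relation.ReflTransGen (Step T) u v) :
    Quot.mk (Step T) u = Quot.mk (Step T) v := by
  induction h with
  | refl => rfl
  | tail _ hst ih => exact ih.trans (Quot.sound hst)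

lemma invW_cancel_rtg (l : Word P) :
    Relation.ReflTransGen (Step T) (invW l ++ l) [] := by
  induction l with
  | nil => exact .refl
  | cons pb t ih =>
      obtain ⟨x, b⟩ := pb
      have h1 : Step T (invW ((x, b) :: t) ++ (x, b) :: t) (invW t ++ t) := by
        have hrw : Rw T [(x, !b), (x, b)] [] := by
          cases b
          · simpa using Rw.cpn x
          · simpa using Rw.cnp x
        have := step_of T hrw (invW t) t
        simpa [invW_cons, List.append_assoc] using this
      exact Relation.ReflTransGen.head h1 ih

variable {T}

lemma eval_eq_imp_eqvGen (hcyc : ∀ x y z : P, (x, y, z) ∈ T → (y, z, x) ∈ T)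
    {u v : Word P} (h : evalW T u = evalW T v) : Relation.EqvGen (Step T) u v := by
  classical
  letI instMul : Mul (WQ T) := ⟨fun q₁ q₂ =>
    Quot.liftOn q₁
      (fun l₁ => Quot.liftOn q₂ (fun l₂ => Quot.mk _ (l₁ ++ l₂))
        (fun l₂ l₂' hst => Quot.sound (by simpa using step_context T hst l₁ [])))
      (fun l₁ l₁' hst => by
        refine Quot.inductionOn q₂ (fun l₂ => ?_)
        exact Quot.sound (by simpa using step_context T hst [] l₂))⟩
  have mul_mk : ∀ l₁ l₂ : Word P,
      (Quot.mk (Step T) l₁ * Quot.mk (Step T) l₂) = Quot.mk (Step T) (l₁ ++ l₂) :=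
    fun _ _ => rfl
  letI instOne : One (WQ T) := ⟨Quot.mk _ []⟩
  letI instInv : Inv (WQ T) := ⟨Quot.map invW (fun _ _ hst => step_invW hcyc hst)⟩
  letI instGrp : Group (WQ T) :=
    { mul_assoc := by
        intro q₁ q₂ q₃
        refine Quot.inductionOn q₁ (fun l₁ => Quot.inductionOn q₂
          (fun l₂ => Quot.inductionOn q₃ (fun l₃ => ?_)))
        simp only [mul_mk, List.append_assoc]
      one_mul := by
        intro q; refine Quot.inductionOn q (fun l => ?_)
        show Quot.mk (Step T) ([] ++ l) = Quot.mk (Step T) l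
        rw [List.nil_append]
      mul_one := by
        intro q; refine Quot.inductionOn q (fun l => ?_)
        show Quot.mk (Step T) (l ++ []) = Quot.mk (Step T) l
        rw [List.append_nil]
      inv_mul_cancel := by
        intro q; refine Quot.inductionOn q (fun l => ?_)
        show Quot.mk (Step T) (invW l ++ l) = Quot.mk (Step T) []
        exact rtg_mkeq T (invW_cancel_rtg T l) }
  set f : P → WQ T := fun x => Quot.mk _ [(x, true)] with hf
  have hrels : ∀ r ∈ A2Rels T, FreeGroup.lift f r = 1 := by
    rintro r ⟨⟨x, y, z⟩, hmem, rfl⟩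
    have : FreeGroup.lift f (FreeGroup.of x * FreeGroup.of y * FreeGroup.of z)
        = Quot.mk (Step T) [(x, true), (y, true), (z, true)] := by
      simp only [map_mul, FreeGroup.lift_apply_of, hf, mul_mk]
      rfl
    rw [this]
    have s1 : Step T [(x, true), (y, true), (z, true)] [(z, false), (z, true)] := by
      simpa using step_head T (Rw.pp hmem) [(z, true)]
    have s2 : Step T [(z, false), (z, true)] [] := step_exact T (Rw.cnp z)
    exact ((Quot.sound s1).trans (Quot.sound s2))
  let φ : A2TildeGroup T →* WQ T := PresentedGroup.toGroup hrels
  have hφa : ∀ x : P, φ (a T x) = Quot.mk (Step T) [(x, true)] :=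
    fun x => PresentedGroup.toGroup.of hrels
  have key : ∀ l : Word P, φ (evalW T l) = Quot.mk (Step T) l := by
    intro l
    induction l with
    | nil => rw [evalW_nil, map_one]; rfl
    | cons pb t ih =>
        rcases pb with ⟨x, b⟩
        have hl : φ (letterEval T (x, b)) = Quot.mk (Step T) [(x, b)] := by
          cases b
          · show φ ((a T x)⁻¹) = _
            rw [map_inv, hφa]
            show Quot.mk (Step T) (invW [(x, true)]) = _
            rfl
          · exact hφa x
        rw [evalW_cons, map_mul, hl, ih, mul_mk]
        rfl
  have : Quot.mk (Step T) u = Quot.mk (Step T) v := by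
    rw [← key u, ← key v, h]
  exact Quot.eqvGen_exact this

variable (T)

lemma evalW_eq_mk (l : Word P) :
    evalW T l = PresentedGroup.mk (A2Rels T) (FreeGroup.mk l) := by
  induction l with
  | nil => simp [← FreeGroup.one_eq_mk]
  | cons pb t ih =>
      rcases pb with ⟨x, b⟩
      have : FreeGroup.mk ((x, b) :: t) = FreeGroup.mk [(x, b)] * FreeGroup.mk t := by
        rw [FreeGroup.mul_mk]; rfl
      rw [evalW_cons, ih, this, map_mul]
      congr 1
      cases b
      · show (a T x)⁻¹ = _
        have : (FreeGroup.of x : FreeGroup P)⁻¹ = FreeGroup.mk [(x, false)] := by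
          rw [show (FreeGroup.of x : FreeGroup P) = FreeGroup.mk [(x, true)] from rfl,
            FreeGroup.inv_mk]
          rfl
        rw [← this, map_inv]
        rfl
      · rfl

lemma eval_surjective : Function.Surjective (evalW T) := by
  classical
  intro w
  induction w using PresentedGroup.induction_on with
  | _ z => exact ⟨z.toWord, by rw [evalW_eq_mk, FreeGroup.mk_toWord]⟩

end Eval

section Shape

variable {X : Type*}

lemma chain'_decomp {r : X → X → Prop} {l : List X} :
    l.Chain' r ↔ ∀ c₁ x y c₂, l = c₁ ++ x :: y :: c₂ → r x y := by
  constructor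
  · intro h c₁ x y c₂ heq
    subst heq
    have h2 : List.Chain' r (x :: y :: c₂) := (List.isChain_append.1 h).2.1
    exact (List.isChain_cons_cons.1 h2).1
  · intro h
    induction l with
    | nil => exact List.isChain_nil
    | cons x t ih =>
        cases t with
        | nil => exact List.isChain_singleton x
        | cons y t' =>
            refine List.isChain_cons_cons.2 ⟨h [] x y t' rfl, ih ?_⟩
            intro c₁ x' y' c₂ heq
            exact h (x :: c₁) x' y' c₂ (by rw [heq]; rfl)

variable {T : Set (P × P × P)} {R : P → P → Prop}

/-- pairs which are allowed to be adjacent in a normal word -/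
def GoodPair (R : P → P → Prop) : P × Bool → P × Bool → Prop := fun pq₁ pq₂ =>
  match pq₁, pq₂ with
  | (p, true), (q, true) => ¬ R p q
  | (p, false), (q, false) => ¬ R q p
  | (p, true), (q, false) => p ≠ q
  | (_, false), (_, true) => False

variable (hTR : ∀ x y : P, (∃ z, (x, y, z) ∈ T) ↔ R x y)
variable (hcyc : ∀ x y z : P, (x, y, z) ∈ T → (y, z, x) ∈ T)
variable (hline : ∀ p q : P, ∃ v, R v p ∧ R v q)

include hTR hcyc hline in
lemma irred_iff_chain {l : Word P} : Irred T l ↔ l.Chain' (GoodPair R) := by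
  constructor
  · intro hirr
    rw [chain'_decomp]
    rintro c₁ ⟨p, bp⟩ ⟨q, bq⟩ c₂ rfl
    by_contra hbad
    cases bp <;> cases bq
    · -- (p,false),(q,false) : bad means R q p
      simp only [GoodPair, not_not] at hbad
      obtain ⟨r, hr⟩ := (hTR q p).2 hbad
      exact hirr _ ⟨c₁, c₂, _, _, Rw.nn hr, by simp, rfl⟩
    · -- (p,false),(q,true) : always a redex
      by_cases hpq : p = q
      · subst hpq
        exact hirr _ ⟨c₁, c₂, _, _, Rw.cnp p, by simp, rfl⟩
      · obtain ⟨v, hvp, hvq⟩ := hline p q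
        obtain ⟨c, hc⟩ := (hTR v p).2 hvp
        obtain ⟨w, hw⟩ := (hTR v q).2 hvq
        exact hirr _ ⟨c₁, c₂, _, _, Rw.mv hpq (hcyc _ _ _ hc) hw, by simp, rfl⟩
    · -- (p,true),(q,false) : bad means p = q
      simp only [GoodPair, not_not, Ne, not_not] at hbad
      subst hbad
      exact hirr _ ⟨c₁, c₂, _, _, Rw.cpn p, by simp, rfl⟩
    · -- (p,true),(q,true) : bad means R p q
      simp only [GoodPair, not_not] at hbad
      obtain ⟨z, hz⟩ := (hTR p q).2 hbad
      exact hirr _ ⟨c₁, c₂, _, _, Rw.pp hz, by simp, rfl⟩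
  · rintro hch v ⟨c₁, c₂, s, t, hrw, rfl, rfl⟩
    rw [chain'_decomp] at hch
    cases hrw with
    | cpn x => exact absurd rfl (hch c₁ (x, true) (x, false) c₂ (by simp))
    | cnp x => exact hch c₁ (x, false) (x, true) c₂ (by simp)
    | pp h =>
        rename_i x y z
        exact (hch c₁ (x, true) (y, true) c₂ (by simp)) (memR hTR h)
    | nn h =>
        rename_i p q r
        exact (hch c₁ (p, false) (q, false) c₂ (by simp)) (memR hTR h)
    | mv hne h1 h2 =>
        rename_i p x u v w
        exact hch c₁ (p, false) (x, true) c₂ (by simp)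

/-- the word associated to a pair of lists: positive then negative letters -/
def wordOf (xs ys : List P) : Word P :=
  xs.map (fun x => (x, true)) ++ ys.map (fun y => (y, false))

@[simp] lemma wordOf_length (xs ys : List P) :
    (wordOf xs ys).length = xs.length + ys.length := by simp [wordOf]

lemma chain_wordOf_iff {xs ys : List P} :
    (wordOf xs ys).Chain' (GoodPair R) ↔
      List.Chain' (fun p q => ¬ R p q) xs ∧ List.Chain' (fun p q => ¬ R q p) ys ∧
      (∀ x ∈ xs.getLast?, ∀ y ∈ ys.head?, x ≠ y) := by
  unfold List.Chain'
  rw [wordOf, List.isChain_append, List.isChain_map, List.isChain_map]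
  constructor
  · rintro ⟨h1, h2, h3⟩
    refine ⟨h1, h2, ?_⟩
    intro x hx y hy
    have := h3 (x, true) (by rw [List.getLast?_map, hx]; rfl)
      (y, false) (by rw [List.head?_map, hy]; rfl)
    exact this
  · rintro ⟨h1, h2, h3⟩
    refine ⟨h1, h2, ?_⟩
    intro pb hpb qb hqb
    rw [List.getLast?_map] at hpb
    rw [List.head?_map] at hqb
    rcases hx : xs.getLast? with _ | x <;> rw [hx] at hpb <;> simp at hpb
    rcases hy : ys.head? with _ | y <;> rw [hy] at hqb <;> simp at hqb
    subst hpb; subst hqb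
    exact h3 x (by simp [hx]) y (by simp [hy])

lemma chain_shape {l : Word P} (h : l.Chain' (GoodPair R)) :
    ∃ xs ys, l = wordOf xs ys := by
  induction l with
  | nil => exact ⟨[], [], rfl⟩
  | cons pb t ih =>
      obtain ⟨xs, ys, rfl⟩ := ih h.tail
      obtain ⟨x, b⟩ := pb
      cases b
      · -- negative head: positive part must be empty
        cases xs with
        | nil => exact ⟨[], x :: ys, rfl⟩
        | cons a xs' =>
            exfalso
            have := List.isChain_cons_cons.1 h
            exact this.1
      · exact ⟨x :: xs, ys, rfl⟩

lemma wordOf_inj {xs ys xs' ys' : List P} (h : wordOf xs ys = wordOf xs' ys') :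
    xs = xs' ∧ ys = ys' := by
  induction xs generalizing xs' with
  | nil =>
      cases xs' with
      | nil =>
          refine ⟨rfl, ?_⟩
          have := congrArg (fun l : Word P => l.map Prod.fst) h
          simpa [wordOf, Function.comp_def] using this
      | cons a' t' =>
          exfalso
          cases ys with
          | nil => exact absurd (congrArg List.length h) (by simp [wordOf])
          | cons y ys =>
              have := congrArg List.head? h
              simp [wordOf] at this
  | cons a t ih =>
      cases xs' with
      | nil =>
          exfalso
          cases ys' with
          | nil => exact absurd (congrArg List.length h) (by simp [wordOf])
          | cons y ys' =>
              have := congrArg List.head? h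
              simp [wordOf] at this
      | cons a' t' =>
          have hh := congrArg List.head? h
          simp only [wordOf, List.map_cons, List.cons_append, List.head?_cons,
            Option.some.injEq, Prod.mk.injEq] at hh
          have ht := ih (xs' := t') (by
            have := congrArg List.tail h
            simpa [wordOf] using this)
          exact ⟨by rw [hh.1, ht.1], ht.2⟩

end Shape

section Master

variable {T : Set (P × P × P)} {R : P → P → Prop}
variable (hTR : ∀ x y : P, (∃ z, (x, y, z) ∈ T) ↔ R x y)
variable (hcyc : ∀ x y z : P, (x, y, z) ∈ T → (y, z, x) ∈ T)
variable (huniq : ∀ x y z z' : P, (x, y, z) ∈ T → (x, y, z') ∈ T → z = z')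
variable (hlu : ∀ p q v v' : P, p ≠ q → R v p → R v q → R v' p → R v' q → v = v')

lemma rtg_eval {u v : Word P} (h : Relation.ReflTransGen (Step T) u v) :
    evalW T u = evalW T v := by
  induction h with
  | refl => rfl
  | tail _ hst ih => exact ih.trans (step_eval T hst)

lemma rtg_length_le {u v : Word P} (h : Relation.ReflTransGen (Step T) u v) :
    v.length ≤ u.length := by
  induction h with
  | refl => exact le_rfl
  | tail _ hst ih => exact le_trans (Step.length_le T hst) ih

lemma rtg_counts {u v : Word P} (h : Relation.ReflTransGen (Step T) u v)
    (hl : v.length = u.length) :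
    v.countP (fun pb => pb.2) = u.countP (fun pb => pb.2) ∧
    v.countP (fun pb => !pb.2) = u.countP (fun pb => !pb.2) := by
  induction h with
  | refl => exact ⟨rfl, rfl⟩
  | tail hr hst ih =>
      rename_i b c
      have h1 : c.length ≤ b.length := Step.length_le T hst
      have h2 : b.length ≤ u.length := rtg_length_le hr
      have hb : b.length = u.length := by omega
      have hc : c.length = b.length := by omega
      obtain ⟨i1, i2⟩ := ih hb
      obtain ⟨j1, j2⟩ := Step.counts_of_length_eq T hst hc
      exact ⟨j1.trans i1, j2.trans i2⟩

include hTR hcyc huniq hlu in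
theorem master (w : A2TildeGroup T) :
    ∃ nw : Word P,
      (Irred T nw ∧ evalW T nw = w) ∧
      (∀ l : Word P, Irred T l → evalW T l = w → l = nw) ∧
      (∀ l : Word P, evalW T l = w →
        nw.length ≤ l.length ∧
        (l.length = nw.length →
          l.countP (fun pb => pb.2) = nw.countP (fun pb => pb.2) ∧
          l.countP (fun pb => !pb.2) = nw.countP (fun pb => !pb.2))) := by
  obtain ⟨l₀, rfl⟩ := eval_surjective T w
  obtain ⟨nw, hrtg, hirr⟩ := exists_irred_reduct T l₀
  have heval : evalW T nw = evalW T l₀ := (rtg_eval hrtg).symm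
  have key : ∀ l : Word P, evalW T l = evalW T l₀ →
      Relation.ReflTransGen (Step T) l nw := by
    intro l hl
    have : Relation.EqvGen (Step T) l nw :=
      eval_eq_imp_eqvGen hcyc (hl.trans heval.symm)
    exact eqv_rtg_irred hTR hcyc huniq hlu this hirr
  refine ⟨nw, ⟨hirr, heval⟩, ?_, ?_⟩
  · intro l hlirr hl
    exact (irred_rtg_eq T hlirr (key l hl)).symm
  · intro l hl
    have hrl := key l hl
    refine ⟨rtg_length_le hrl, ?_⟩
    intro hlen
    obtain ⟨c1, c2⟩ := rtg_counts hrl hlen.symm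
    exact ⟨c1.symm, c2.symm⟩

end Master

section EvalWordOf

variable (T : Set (P × P × P))

@[simp] lemma letterEval_pos (x : P) : letterEval T (x, true) = a T x := rfl

@[simp] lemma letterEval_neg (x : P) : letterEval T (x, false) = (a T x)⁻¹ := rfl

lemma evalW_posmap (xs : List P) :
    evalW T (xs.map fun x => (x, true)) = (xs.map fun x => a T x).prod := by
  simp [evalW, List.map_map, Function.comp_def]

lemma evalW_negmap (ys : List P) :
    evalW T (ys.map fun y => (y, false)) = (ys.map fun y => (a T y)⁻¹).prod := by
  simp [evalW, List.map_map, Function.comp_def]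

lemma evalW_wordOf (xs ys : List P) :
    evalW T (wordOf xs ys) =
      (xs.map fun x => a T x).prod * (ys.map fun y => (a T y)⁻¹).prod := by
  rw [wordOf, evalW_append, evalW_posmap, evalW_negmap]

lemma evalW_negpos (ts ss : List P) :
    evalW T ((ts.map fun t => (t, false)) ++ (ss.map fun s => (s, true))) =
      (ts.map fun t => (a T t)⁻¹).prod * (ss.map fun s => a T s).prod := by
  rw [evalW_append, evalW_posmap, evalW_negmap]

end EvalWordOf

section Counts

lemma countP_posmap_pos (xs : List P) :
    (xs.map fun x => (x, true)).countP (fun pb : P × Bool => pb.2) = xs.length := by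
  induction xs <;> simp [List.countP_cons, *]

lemma countP_posmap_neg (xs : List P) :
    (xs.map fun x => (x, true)).countP (fun pb : P × Bool => !pb.2) = 0 := by
  induction xs <;> simp [List.countP_cons, *]

lemma countP_negmap_pos (ys : List P) :
    (ys.map fun y => (y, false)).countP (fun pb : P × Bool => pb.2) = 0 := by
  induction ys <;> simp [List.countP_cons, *]

lemma countP_negmap_neg (ys : List P) :
    (ys.map fun y => (y, false)).countP (fun pb : P × Bool => !pb.2) = ys.length := by
  induction ys <;> simp [List.countP_cons, *]

lemma countP_wordOf_pos (xs ys : List P) :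
    (wordOf xs ys).countP (fun pb : P × Bool => pb.2) = xs.length := by
  rw [wordOf, List.countP_append, countP_posmap_pos, countP_negmap_pos]
  omega

lemma countP_wordOf_neg (xs ys : List P) :
    (wordOf xs ys).countP (fun pb : P × Bool => !pb.2) = ys.length := by
  rw [wordOf, List.countP_append, countP_posmap_neg, countP_negmap_neg]
  omega

lemma negpos_reverse (ts ss : List P) :
    ((ts.map fun t => (t, false)) ++ (ss.map fun s => (s, true))).reverse =
      wordOf ss.reverse ts.reverse := by
  simp [wordOf, List.map_reverse]

end Counts

section Plane

variable (Pt Ln : Type) [Membership Pt Ln] [Configuration.ProjectivePlane Pt Ln]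

open Configuration HasLines HasPoints

lemma exists_mem_line (p q : Pt) : ∃ l : Ln, p ∈ l ∧ q ∈ l := by
  by_cases hpq : p = q
  · subst hpq
    obtain ⟨p₁, p₂, p₃, l₁, l₂, l₃, h₁₂, h₁₃, h₂₁, h₂₂, h₂₃, h₃₁, h₃₂, h₃₃⟩ :=
      Configuration.ProjectivePlane.exists_config (P := Pt) (L := Ln)
    have hne : p₁ ≠ p₂ := fun h => h₁₂ (h ▸ h₂₂)
    by_cases hp : p = p₁
    · have h2 : p ≠ p₂ := by rw [hp]; exact hne
      exact ⟨mkLine h2, (mkLine_ax h2).1, (mkLine_ax h2).1⟩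
    · exact ⟨mkLine hp, (mkLine_ax hp).1, (mkLine_ax hp).1⟩
  · exact ⟨mkLine hpq, (mkLine_ax hpq).1, (mkLine_ax hpq).2⟩

lemma exists_mem_point (l m : Ln) : ∃ p : Pt, p ∈ l ∧ p ∈ m := by
  by_cases hlm : l = m
  · subst hlm
    obtain ⟨p₁, p₂, p₃, l₁, l₂, l₃, h₁₂, h₁₃, h₂₁, h₂₂, h₂₃, h₃₁, h₃₂, h₃₃⟩ :=
      Configuration.ProjectivePlane.exists_config (P := Pt) (L := Ln)
    have hne : l₂ ≠ l₃ := fun h => h₃₃ (h ▸ h₃₂)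
    by_cases hl : l = l₂
    · have h2 : l ≠ l₃ := by rw [hl]; exact hne
      exact ⟨mkPoint h2, (mkPoint_ax h2).1, (mkPoint_ax h2).1⟩
    · exact ⟨mkPoint hl, (mkPoint_ax hl).1, (mkPoint_ax hl).1⟩
  · exact ⟨mkPoint hlm, (mkPoint_ax hlm).1, (mkPoint_ax hlm).2⟩

end Plane

end A2NFAux

open A2NFAux in
/-- normal forms in A₂-tilde groups (Proposition 3.2 of
Cartwright–Mantero–Steger–Zappa): every element `w` has a unique right normal form and a
unique left normal form, with matching lengths `(m, n)`, these are of minimal length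
among words representing `w`, and any representative word of minimal length `m + n`
contains exactly `m` generators and `n` inverses of generators. -/
theorem a2_normal_forms (P L : Type) [Fintype P] [Fintype L] [Membership P L]
    [Configuration.ProjectivePlane P L] (σ : P ≃ L) (T : Set (P × P × P))
    (hT1 : ∀ x y : P, (∃ z, (x, y, z) ∈ T) ↔ y ∈ σ x)
    (hT2 : ∀ x y z : P, (x, y, z) ∈ T → (y, z, x) ∈ T)
    (hT3 : ∀ x y z z' : P, (x, y, z) ∈ T → (x, y, z') ∈ T → z = z') :
    ∀ w : A2TildeGroup T, ∃ m n : ℕ,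
      (∃! p : List P × List P, IsRNF σ T w p.1 p.2) ∧
      (∀ xs ys : List P, IsRNF σ T w xs ys → xs.length = m ∧ ys.length = n) ∧
      (∃! q : List P × List P, IsLNF σ T w q.1 q.2) ∧
      (∀ ts ss : List P, IsLNF σ T w ts ss → ts.length = n ∧ ss.length = m) ∧
      (∀ l : List (P × Bool), (l.map (letterEval T)).prod = w →
        m + n ≤ l.length ∧
        (l.length = m + n →
          (l.filter fun pb => pb.2).length = m ∧
          (l.filter fun pb => !pb.2).length = n)) := by
  classical
  intro w
  -- geometric hypotheses for the right system
  have hline : ∀ p q : P, ∃ v : P, p ∈ σ v ∧ q ∈ σ v := by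
    intro p q
    obtain ⟨l, hp, hq⟩ := exists_mem_line P L p q
    exact ⟨σ.symm l, by simpa using hp, by simpa using hq⟩
  have hlu : ∀ p q v v' : P, p ≠ q → p ∈ σ v → q ∈ σ v → p ∈ σ v' → q ∈ σ v' → v = v' := by
    intro p q v v' hne h1 h2 h3 h4
    rcases Configuration.Nondegenerate.eq_or_eq h1 h2 h3 h4 with h | h
    · exact absurd h hne
    · exact σ.injective h
  obtain ⟨nw, ⟨hnwirr, hnweval⟩, hnwuniq, hnwmin⟩ :=
    master (R := fun a b => b ∈ σ a) hT1 hT2 hT3 hlu w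
  have hnwchain := (irred_iff_chain (R := fun a b => b ∈ σ a) hT1 hT2 hline).1 hnwirr
  obtain ⟨xs₀, ys₀, rfl⟩ := chain_shape hnwchain
  -- characterization of right normal forms
  have hRNF : ∀ xs ys : List P, IsRNF σ T w xs ys ↔
      (evalW T (wordOf xs ys) = w ∧ Irred T (wordOf xs ys)) := by
    intro xs ys
    rw [IsRNF, irred_iff_chain (R := fun a b => b ∈ σ a) hT1 hT2 hline,
      chain_wordOf_iff, evalW_wordOf]
    constructor
    · rintro ⟨he, h1, h2, h3⟩; exact ⟨he.symm, h1, h2, h3⟩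
    · rintro ⟨he, h1, h2, h3⟩; exact ⟨he.symm, h1, h2, h3⟩
  have hpart1 : ∃! p : List P × List P, IsRNF σ T w p.1 p.2 := by
    refine ⟨(xs₀, ys₀), (hRNF xs₀ ys₀).2 ⟨hnweval, hnwirr⟩, ?_⟩
    rintro ⟨xs, ys⟩ hxy
    rw [hRNF] at hxy
    obtain ⟨h1, h2⟩ := wordOf_inj (hnwuniq _ hxy.2 hxy.1)
    simp only [Prod.mk.injEq]
    exact ⟨h1, h2⟩
  have hpart2 : ∀ xs ys : List P, IsRNF σ T w xs ys →
      xs.length = xs₀.length ∧ ys.length = ys₀.length := by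
    intro xs ys h
    rw [hRNF] at h
    obtain ⟨h1, h2⟩ := wordOf_inj (hnwuniq _ h.2 h.1)
    rw [h1, h2]
    exact ⟨rfl, rfl⟩
  -- the opposite system
  set T₂ : Set (P × P × P) := {t : P × P × P | (t.2.1, t.1, t.2.2) ∈ T} with hT₂def
  have hT1₂ : ∀ x y : P, (∃ z, (x, y, z) ∈ T₂) ↔ x ∈ σ y := fun x y => hT1 y x
  have hT2₂ : ∀ x y z : P, (x, y, z) ∈ T₂ → (y, z, x) ∈ T₂ := by
    intro x y z h
    show (z, y, x) ∈ T
    exact hT2 _ _ _ (hT2 _ _ _ h)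
  have hT3₂ : ∀ x y z z' : P, (x, y, z) ∈ T₂ → (x, y, z') ∈ T₂ → z = z' :=
    fun x y z z' h h' => hT3 y x z z' h h'
  have hline₂ : ∀ p q : P, ∃ v : P, v ∈ σ p ∧ v ∈ σ q :=
    fun p q => exists_mem_point P L (σ p) (σ q)
  have hlu₂ : ∀ p q v v' : P, p ≠ q → v ∈ σ p → v ∈ σ q → v' ∈ σ p → v' ∈ σ q → v = v' := by
    intro p q v v' hne h1 h2 h3 h4
    rcases Configuration.Nondegenerate.eq_or_eq h1 h3 h2 h4 with h | h
    · exact h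
    · exact absurd (σ.injective h) hne
  -- the anti-isomorphisms
  have hrelκ : ∀ r ∈ A2Rels T,
      FreeGroup.lift (fun x => MulOpposite.op (a T₂ x)) r = 1 := by
    rintro r ⟨⟨x, y, z⟩, hmem, rfl⟩
    have h2 : (z, y, x) ∈ T₂ := by
      show (y, z, x) ∈ T
      exact hT2 _ _ _ hmem
    have h1 := rel_one T₂ h2
    simp only [map_mul, FreeGroup.lift_apply_of]
    rw [← MulOpposite.op_mul, ← MulOpposite.op_mul, ← mul_assoc, h1, MulOpposite.op_one]
  have hrelκ' : ∀ r ∈ A2Rels T₂,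
      FreeGroup.lift (fun x => MulOpposite.op (a T x)) r = 1 := by
    rintro r ⟨⟨x, y, z⟩, hmem, rfl⟩
    have hmem' : (y, x, z) ∈ T := hmem
    have h2 : (z, y, x) ∈ T := hT2 _ _ _ (hT2 _ _ _ hmem')
    have h1 := rel_one T h2
    simp only [map_mul, FreeGroup.lift_apply_of]
    rw [← MulOpposite.op_mul, ← MulOpposite.op_mul, ← mul_assoc, h1, MulOpposite.op_one]
  set κ : A2TildeGroup T →* (A2TildeGroup T₂)ᵐᵒᵖ := PresentedGroup.toGroup hrelκ with hκdef
  set κ' : A2TildeGroup T₂ →* (A2TildeGroup T)ᵐᵒᵖ := PresentedGroup.toGroup hrelκ' with hκ'def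
  have hκa : ∀ x : P, κ (a T x) = MulOpposite.op (a T₂ x) :=
    fun x => PresentedGroup.toGroup.of hrelκ
  have hκ'a : ∀ x : P, κ' (a T₂ x) = MulOpposite.op (a T x) :=
    fun x => PresentedGroup.toGroup.of hrelκ'
  have κinj : Function.Injective κ := by
    have hψ : ∀ g : A2TildeGroup T,
        MulOpposite.unop (κ' (MulOpposite.unop (κ g))) = g := by
      let ψ : A2TildeGroup T →* A2TildeGroup T :=
        (MulEquiv.opOp (A2TildeGroup T)).symm.toMonoidHom.comp
          ((MonoidHom.op κ').comp κ)
      have hid : ψ = MonoidHom.id _ := by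
        apply PresentedGroup.ext
        intro x
        show MulOpposite.unop (MulOpposite.unop ((MonoidHom.op κ') (κ (PresentedGroup.of x))))
          = PresentedGroup.of x
        rw [show (PresentedGroup.of x : A2TildeGroup T) = a T x from rfl, hκa]
        show MulOpposite.unop (MulOpposite.unop
          (MulOpposite.op (κ' (MulOpposite.unop (MulOpposite.op (a T₂ x)))))) = a T x
        simp only [MulOpposite.unop_op, hκ'a]
      intro g
      have := congrArg (fun f : A2TildeGroup T →* A2TildeGroup T => f g) hid
      simpa [ψ] using this
    intro u v h
    rw [← hψ u, ← hψ v, h]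
  have κeval : ∀ l : Word P,
      κ (evalW T l) = MulOpposite.op (evalW T₂ l.reverse) := by
    intro l
    induction l with
    | nil => simp
    | cons pb t ih =>
        obtain ⟨x, b⟩ := pb
        rw [evalW_cons, map_mul, ih]
        have hl : κ (letterEval T (x, b)) = MulOpposite.op (letterEval T₂ (x, b)) := by
          cases b
          · rw [letterEval_neg, map_inv, hκa, letterEval_neg, MulOpposite.op_inv]
          · rw [letterEval_pos, hκa, letterEval_pos]
        rw [hl, ← MulOpposite.op_mul]
        have : ((x, b) :: t).reverse = t.reverse ++ [(x, b)] := by simp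
        rw [this, evalW_append]
        congr 1
        simp [evalW]
  -- transfer of evaluation along the anti-isomorphism
  have hevtrans : ∀ l : Word P,
      evalW T l = w ↔ evalW T₂ l.reverse = MulOpposite.unop (κ w) := by
    intro l
    constructor
    · intro h
      rw [← h, κeval l, MulOpposite.unop_op]
    · intro h
      apply κinj
      rw [κeval l, h, MulOpposite.op_unop]
  set w₂ : A2TildeGroup T₂ := MulOpposite.unop (κ w) with hw₂def
  have hLNF : ∀ ts ss : List P, IsLNF σ T w ts ss ↔
      (evalW T₂ (wordOf ss.reverse ts.reverse) = w₂ ∧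
        Irred T₂ (wordOf ss.reverse ts.reverse)) := by
    intro ts ss
    rw [IsLNF, irred_iff_chain (R := fun a b => a ∈ σ b) hT1₂ hT2₂ hline₂, chain_wordOf_iff]
    have heq : evalW T₂ (wordOf ss.reverse ts.reverse) = w₂ ↔
        w = (ts.map fun t => (a T t)⁻¹).prod * (ss.map fun s => a T s).prod := by
      rw [← negpos_reverse ts ss, ← hevtrans, evalW_negpos]
      exact ⟨fun h => h.symm, fun h => h.symm⟩
    constructor
    · rintro ⟨he, hss, hts, hj⟩
      refine ⟨heq.2 he, ?_, ?_, ?_⟩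
      · exact List.isChain_reverse.mpr hss
      · exact List.isChain_reverse.mpr hts
      · intro x hx y hy
        rw [List.getLast?_reverse] at hx
        rw [List.head?_reverse] at hy
        exact (hj y hy x hx).symm
    · rintro ⟨he, hss, hts, hj⟩
      refine ⟨heq.1 he, ?_, ?_, ?_⟩
      · exact List.isChain_reverse.mp hss
      · exact List.isChain_reverse.mp hts
      · intro t ht s hs
        refine (hj s ?_ t ?_).symm
        · rw [List.getLast?_reverse]; exact hs
        · rw [List.head?_reverse]; exact ht
  obtain ⟨nw₂, ⟨hnw₂irr, hnw₂eval⟩, hnw₂uniq, hnw₂min⟩ :=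
    master (R := fun a b => a ∈ σ b) hT1₂ hT2₂ hT3₂ hlu₂ w₂
  obtain ⟨as, bs, rfl⟩ := chain_shape
    ((irred_iff_chain (R := fun a b => a ∈ σ b) hT1₂ hT2₂ hline₂).1 hnw₂irr)
  -- part 3 : unique left normal form
  have hcan : IsLNF σ T w bs.reverse as.reverse := by
    rw [hLNF]
    simpa [List.reverse_reverse] using And.intro hnw₂eval hnw₂irr
  have hpart3 : ∃! q : List P × List P, IsLNF σ T w q.1 q.2 := by
    refine ⟨(bs.reverse, as.reverse), hcan, ?_⟩
    rintro ⟨ts, ss⟩ h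
    rw [hLNF] at h
    obtain ⟨h1, h2⟩ := wordOf_inj (hnw₂uniq _ h.2 h.1)
    simp only [Prod.mk.injEq]
    constructor
    · rw [← h2, List.reverse_reverse]
    · rw [← h1, List.reverse_reverse]
  -- length comparison between the two normal forms
  have hL₀ : evalW T ((bs.reverse.map fun t => (t, false))
      ++ (as.reverse.map fun s => (s, true))) = w := by
    rw [hevtrans, negpos_reverse]
    simpa [List.reverse_reverse] using hnw₂eval
  have hmin1 := hnwmin _ hL₀
  have hnwrev : evalW T₂ (wordOf xs₀ ys₀).reverse = w₂ := (hevtrans _).1 hnweval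
  have hmin2 := (hnw₂min _ hnwrev).1
  have hlenL₀ : ((bs.reverse.map fun t => (t, false))
      ++ (as.reverse.map fun s => (s, true))).length = bs.length + as.length := by
    simp
  have hlen2' : as.length + bs.length ≤ xs₀.length + ys₀.length := by
    simpa using hmin2
  have hlen1' : xs₀.length + ys₀.length ≤ bs.length + as.length := by
    simpa using hmin1.1
  have hlenEq : as.length + bs.length = xs₀.length + ys₀.length := by omega
  have hcounts := hmin1.2 (by simp; omega)
  have hasx : as.length = xs₀.length := by
    have h1 : ((bs.reverse.map fun t => (t, false)) ++
        (as.reverse.map fun s => (s, true))).countP (fun pb : P × Bool => pb.2)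
        = as.length := by
      rw [List.countP_append, countP_posmap_pos, countP_negmap_pos]
      simp
    have h2 := hcounts.1
    rw [h1, countP_wordOf_pos] at h2
    exact h2
  have hbsy : bs.length = ys₀.length := by
    have h1 : ((bs.reverse.map fun t => (t, false)) ++
        (as.reverse.map fun s => (s, true))).countP (fun pb : P × Bool => !pb.2)
        = bs.length := by
      rw [List.countP_append, countP_posmap_neg, countP_negmap_neg]
      simp
    have h2 := hcounts.2
    rw [h1, countP_wordOf_neg] at h2
    exact h2
  have hpart4 : ∀ ts ss : List P, IsLNF σ T w ts ss →
      ts.length = ys₀.length ∧ ss.length = xs₀.length := by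
    intro ts ss h
    rw [hLNF] at h
    obtain ⟨h1, h2⟩ := wordOf_inj (hnw₂uniq _ h.2 h.1)
    constructor
    · have := congrArg List.length h2
      simpa [hbsy] using this
    · have := congrArg List.length h1
      simpa [hasx] using this
  refine ⟨xs₀.length, ys₀.length, hpart1, hpart2, hpart3, hpart4, ?_⟩
  intro l hl
  have h := hnwmin l hl
  constructor
  · simpa using h.1
  · intro hlen
    obtain ⟨c1, c2⟩ := h.2 (by simpa using hlen)
    constructor
    · rw [← List.countP_eq_length_filter, c1, countP_wordOf_pos]
    · rw [← List.countP_eq_length_filter, c2, countP_wordOf_neg]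
end

section
/- Let Γ_𝒯 be the A₂-tilde group of a finite projective plane (P, L) with bijection σ : P ≃ L and compatible triella 𝒯. For all x, y ∈ P with x ≠ y, there exists a unique pair (s, t) ∈ P × P with s ≠ t such that (a_x)⁻¹ · a_y = a_s · (a_t)⁻¹ in Γ_𝒯. -/
namespace A2Aux


open List Configuration

attribute [local instance] Classical.propDecidable

set_option linter.unusedSectionVars false

variable {P L : Type} [Membership P L] [Fintype P] [Fintype L]
  [Configuration.ProjectivePlane P L]

structure Tri (σ : P ≃ L) (T : Set (P × P × P)) : Prop where
  t1 : ∀ x y : P, (∃ z, (x, y, z) ∈ T) ↔ y ∈ σ x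
  t2 : ∀ x y z : P, (x, y, z) ∈ T → (y, z, x) ∈ T
  t3 : ∀ x y z z' : P, (x, y, z) ∈ T → (x, y, z') ∈ T → z = z'

variable {σ : P ≃ L} {T : Set (P × P × P)}

noncomputable def tri (T : Set (P × P × P)) (x y : P) : P :=
  if h : ∃ z, (x, y, z) ∈ T then h.choose else x

lemma Tri.mem1 (hT : Tri σ T) {x y z : P} (h : (x, y, z) ∈ T) : y ∈ σ x :=
  (hT.t1 x y).mp ⟨z, h⟩

lemma Tri.mem2 (hT : Tri σ T) {x y z : P} (h : (x, y, z) ∈ T) : z ∈ σ y :=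
  hT.mem1 (hT.t2 _ _ _ h)

lemma Tri.mem3 (hT : Tri σ T) {x y z : P} (h : (x, y, z) ∈ T) : x ∈ σ z :=
  hT.mem1 (hT.t2 _ _ _ (hT.t2 _ _ _ h))

lemma tri_eq (hT : Tri σ T) {x y z : P} (h : (x, y, z) ∈ T) : tri T x y = z := by
  have he : ∃ z, (x, y, z) ∈ T := ⟨z, h⟩
  rw [tri, dif_pos he]
  exact hT.t3 _ _ _ _ he.choose_spec h

lemma tri_mem (hT : Tri σ T) {x y : P} (h : y ∈ σ x) : (x, y, tri T x y) ∈ T := by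
  have he : ∃ z, (x, y, z) ∈ T := (hT.t1 x y).mpr h
  rw [tri, dif_pos he]
  exact he.choose_spec

/-- the point whose line passes through two distinct points -/
noncomputable def lp (σ : P ≃ L) (q x : P) : P :=
  if h : q ≠ x then σ.symm (HasLines.mkLine h) else q

lemma mem_lp_left {q x : P} (h : q ≠ x) : q ∈ σ (lp σ q x) := by
  rw [lp, dif_pos h, Equiv.apply_symm_apply]
  exact (HasLines.mkLine_ax h).1

lemma mem_lp_right {q x : P} (h : q ≠ x) : x ∈ σ (lp σ q x) := by
  rw [lp, dif_pos h, Equiv.apply_symm_apply]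
  exact (HasLines.mkLine_ax h).2

noncomputable def DD (σ : P ≃ L) (T : Set (P × P × P)) (q x : P) : P × P :=
  (tri T (lp σ q x) q, tri T (lp σ q x) x)

lemma DD_rel1 (hT : Tri σ T) {q x : P} (h : q ≠ x) :
    (q, (DD σ T q x).1, lp σ q x) ∈ T :=
  hT.t2 _ _ _ (tri_mem hT (mem_lp_left h))

lemma DD_rel2 (hT : Tri σ T) {q x : P} (h : q ≠ x) :
    (x, (DD σ T q x).2, lp σ q x) ∈ T :=
  hT.t2 _ _ _ (tri_mem hT (mem_lp_right h))

lemma DD_ne (hT : Tri σ T) {q x : P} (h : q ≠ x) : (DD σ T q x).1 ≠ (DD σ T q x).2 := by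
  intro he
  apply h
  have h1 := hT.t2 _ _ _ (DD_rel1 hT h)
  have h2 := hT.t2 _ _ _ (DD_rel2 hT h)
  rw [he] at h1
  exact hT.t3 _ _ _ _ h1 h2

lemma line_unique {a b c d : P} (hab : a ≠ b) (hca : c ∈ σ a) (hcb : c ∈ σ b)
    (hda : d ∈ σ a) (hdb : d ∈ σ b) : d = c := by
  rcases Configuration.Nondegenerate.eq_or_eq hda hca hdb hcb with h | h
  · exact h
  · exact absurd (σ.injective h) hab

lemma DD_eq_of (hT : Tri σ T) {l p s w u : P} (h1 : (l, p, w) ∈ T) (h2 : (l, s, u) ∈ T)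
    (hps : p ≠ s) : DD σ T p s = (w, u) := by
  have hl : lp σ p s = l := by
    have h3 : p ∈ σ (lp σ p s) := mem_lp_left hps
    have h4 : s ∈ σ (lp σ p s) := mem_lp_right hps
    have h5 : p ∈ σ l := hT.mem1 h1
    have h6 : s ∈ σ l := hT.mem1 h2
    rcases Configuration.Nondegenerate.eq_or_eq h3 h4 h5 h6 with h | h
    · exact absurd h hps
    · exact σ.injective h
  rw [DD, hl, tri_eq hT h1, tri_eq hT h2]

lemma sep (hT : Tri σ T) {a b c d k u : P} (hab : a ≠ b) (hca : c ∈ σ a) (hcb : c ∈ σ b)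
    (hbd : (b, d, u) ∈ T) (hbc : (b, c, k) ∈ T) (hda : d ∈ σ a) : d = c ∧ u = k := by
  have hdb : d ∈ σ b := hT.mem1 hbd
  have hdc : d = c := line_unique hab hca hcb hda hdb
  subst hdc
  exact ⟨rfl, hT.t3 _ _ _ _ hbd hbc⟩


/-! ### word operations -/

noncomputable def pushCore (σ : P ≃ L) (T : Set (P × P × P)) (q : P) :
    List P → List P × P
  | [] => ([], q)
  | x :: xs =>
    ((DD σ T q x).1 :: (pushCore σ T (DD σ T q x).2 xs).1,
      (pushCore σ T (DD σ T q x).2 xs).2)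

@[simp] lemma pushCore_nil (q : P) : pushCore σ T q [] = ([], q) := rfl

lemma pushCore_cons (q x : P) (xs : List P) :
    pushCore σ T q (x :: xs) =
      ((DD σ T q x).1 :: (pushCore σ T (DD σ T q x).2 xs).1,
        (pushCore σ T (DD σ T q x).2 xs).2) := rfl

lemma pushCore_concat (q b : P) (A : List P) :
    pushCore σ T q (A ++ [b]) =
      ((pushCore σ T q A).1 ++ [(DD σ T (pushCore σ T q A).2 b).1],
        (DD σ T (pushCore σ T q A).2 b).2) := by
  induction A generalizing q with
  | nil => simp [pushCore]
  | cons x xs ih => simp [pushCore_cons, ih]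

noncomputable def negStep (σ : P ≃ L) (T : Set (P × P × P)) (S : List P) (r : P) :
    List P → List P × List P
  | [] => (S, [r])
  | y :: ys => if r ∈ σ y then (S ++ [tri T y r], ys) else (S, r :: y :: ys)

@[simp] lemma negStep_nil (S : List P) (r : P) : negStep σ T S r [] = (S, [r]) := rfl

lemma negStep_cons (S : List P) (r y : P) (ys : List P) :
    negStep σ T S r (y :: ys) =
      if r ∈ σ y then (S ++ [tri T y r], ys) else (S, r :: y :: ys) := rfl

lemma negStep_prepend (x : P) (S : List P) (r : P) (ys : List P) :
    negStep σ T (x :: S) r ys =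
      (x :: (negStep σ T S r ys).1, (negStep σ T S r ys).2) := by
  cases ys with
  | nil => simp [negStep]
  | cons y ys => by_cases h : r ∈ σ y <;> simp [negStep_cons, h]

noncomputable def mulNegL (σ : P ≃ L) (T : Set (P × P × P)) (q : P) :
    List P × List P → List P × List P
  | ([], ys) => negStep σ T [] q ys
  | (x :: xs, ys) =>
    if q = x then (xs, ys)
    else negStep σ T (pushCore σ T q (x :: xs)).1 (pushCore σ T q (x :: xs)).2 ys

lemma mulNegL_nil (q : P) (ys : List P) :
    mulNegL σ T q ([], ys) = negStep σ T [] q ys := rfl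

lemma mulNegL_cons (q x : P) (xs ys : List P) :
    mulNegL σ T q (x :: xs, ys) =
      if q = x then (xs, ys)
      else negStep σ T (pushCore σ T q (x :: xs)).1 (pushCore σ T q (x :: xs)).2 ys := rfl

lemma mulNegL_eq_negStep (q : P) (A B : List P) (h : ∀ x ∈ A.head?, q ≠ x) :
    mulNegL σ T q (A, B) = negStep σ T (pushCore σ T q A).1 (pushCore σ T q A).2 B := by
  cases A with
  | nil => simp [mulNegL_nil]
  | cons x xs =>
    have hx : q ≠ x := h x (by simp)
    rw [mulNegL_cons, if_neg hx]

noncomputable def mulPosL (σ : P ≃ L) (T : Set (P × P × P)) (q : P) :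
    List P × List P → List P × List P
  | ([], []) => ([q], [])
  | ([], y :: ys) => if q = y then ([], ys) else ([q], y :: ys)
  | (x :: xs, ys) =>
    if x ∈ σ q then mulNegL σ T (tri T q x) (xs, ys) else (q :: x :: xs, ys)

@[simp] lemma mulPosL_nil_nil (q : P) : mulPosL σ T q ([], []) = ([q], []) := rfl

lemma mulPosL_nil_cons (q y : P) (ys : List P) :
    mulPosL σ T q ([], y :: ys) = if q = y then ([], ys) else ([q], y :: ys) := rfl

lemma mulPosL_cons (q x : P) (xs ys : List P) :
    mulPosL σ T q (x :: xs, ys) =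
      if x ∈ σ q then mulNegL σ T (tri T q x) (xs, ys) else (q :: x :: xs, ys) := rfl

def GoodPair (σ : P ≃ L) (pr : List P × List P) : Prop :=
  List.Chain' (fun p q => q ∉ σ p) pr.1 ∧ List.Chain' (fun p q => p ∉ σ q) pr.2 ∧
    (∀ x ∈ pr.1.getLast?, ∀ y ∈ pr.2.head?, x ≠ y)



/-! ### the main pushing lemma -/

lemma master (hT : Tri σ T) :
    ∀ (xs : List P) (x q : P), List.Chain' (fun p q => q ∉ σ p) (x :: xs) → q ≠ x →
    ∃ S r u, pushCore σ T q (x :: xs) = ((DD σ T q x).1 :: S, r) ∧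
      List.Chain' (fun p q => q ∉ σ p) ((DD σ T q x).1 :: S) ∧
      ((x :: xs).getLast (List.cons_ne_nil x xs), r, u) ∈ T ∧
      u ∈ σ (((DD σ T q x).1 :: S).getLast (List.cons_ne_nil _ _)) ∧
      (((DD σ T q x).1 :: S).getLast (List.cons_ne_nil _ _)) ≠ r ∧
      pushCore σ T (lp σ q x) S = ((x :: xs).dropLast, u) := by
  intro xs
  induction xs with
  | nil =>
    intro x q hch hq
    refine ⟨[], (DD σ T q x).2, lp σ q x, ?_, ?_, ?_, ?_, ?_, ?_⟩
    · simp [pushCore_cons]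
    · simp [List.Chain']
    · simpa using DD_rel2 hT hq
    · simpa using hT.mem2 (DD_rel1 hT hq)
    · simpa using DD_ne hT hq
    · simp
  | cons x₂ xs₂ ih =>
    intro x q hch hq
    have hcons := List.isChain_cons_cons.mp hch
    have hx2 : x₂ ∉ σ x := hcons.1
    have hrel1 : (q, (DD σ T q x).1, lp σ q x) ∈ T := DD_rel1 hT hq
    have hrel2 : (x, (DD σ T q x).2, lp σ q x) ∈ T := DD_rel2 hT hq
    have ht1x : (DD σ T q x).2 ∈ σ x := hT.mem1 hrel2
    have ht1x2 : (DD σ T q x).2 ≠ x₂ := fun h => hx2 (h ▸ ht1x)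
    obtain ⟨S₂, r, u, hpush, hchS, hlast, humem, hlne, hrev⟩ := ih x₂ (DD σ T q x).2 hcons.2 ht1x2
    have hrelA : ((DD σ T q x).2, (DD σ T (DD σ T q x).2 x₂).1, lp σ (DD σ T q x).2 x₂) ∈ T :=
      DD_rel1 hT ht1x2
    have hqx_cyc : ((DD σ T q x).2, lp σ q x, x) ∈ T := hT.t2 _ _ _ hrel2
    have hs2d1 : (DD σ T (DD σ T q x).2 x₂).1 ∉ σ (DD σ T q x).1 := by
      intro hmem
      obtain ⟨hdc, huk⟩ := sep hT (DD_ne hT hq) (hT.mem2 hrel1) (hT.mem2 hrel2)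
        hrelA hqx_cyc hmem
      exact hx2 (huk ▸ mem_lp_right ht1x2)
    have hlpne : lp σ q x ≠ (DD σ T (DD σ T q x).2 x₂).1 := by
      intro h
      have := hT.t3 _ _ _ _ (h ▸ hqx_cyc) hrelA
      exact hx2 (this ▸ mem_lp_right ht1x2)
    have hDD2 : DD σ T (lp σ q x) (DD σ T (DD σ T q x).2 x₂).1 = (x, lp σ (DD σ T q x).2 x₂) :=
      DD_eq_of hT hqx_cyc hrelA hlpne
    refine ⟨(DD σ T (DD σ T q x).2 x₂).1 :: S₂, r, u, ?_, ?_, ?_, ?_, ?_, ?_⟩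
    · rw [pushCore_cons, hpush]
    · exact List.isChain_cons_cons.mpr ⟨hs2d1, hchS⟩
    · rwa [List.getLast_cons (List.cons_ne_nil _ _)]
    · rwa [List.getLast_cons (List.cons_ne_nil _ _)]
    · rwa [List.getLast_cons (List.cons_ne_nil _ _)]
    · rw [pushCore_cons, hDD2, hrev]
      simp



/-! ### goodness preservation -/

lemma GoodPair.tail1 {x : P} {xs ys : List P} (h : GoodPair σ (x :: xs, ys)) :
    GoodPair σ (xs, ys) := by
  refine ⟨h.1.tail, h.2.1, ?_⟩
  intro w hw
  apply h.2.2
  cases xs with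
  | nil => simp at hw
  | cons b l => rwa [List.getLast?_cons_cons]

lemma good_negStep (hT : Tri σ T) {S : List P} {r : P} {ys : List P}
    (hS : List.Chain' (fun p q => q ∉ σ p) S)
    (hys : List.Chain' (fun p q => p ∉ σ q) ys)
    (hrel : ∀ sl ∈ S.getLast?, sl ≠ r ∧
      ∃ u xm, (xm, r, u) ∈ T ∧ u ∈ σ sl ∧ ∀ y ∈ ys.head?, xm ≠ y) :
    GoodPair σ (negStep σ T S r ys) := by
  cases ys with
  | nil =>
    refine ⟨hS, by simp [List.Chain'], ?_⟩
    intro sl hsl w hw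
    simp at hw
    subst hw
    exact (hrel sl hsl).1
  | cons y ys' =>
    rw [negStep_cons]
    by_cases hmem : r ∈ σ y
    · rw [if_pos hmem]
      have hz : (y, r, tri T y r) ∈ T := tri_mem hT hmem
      have hzlast : ∀ sl ∈ S.getLast?, tri T y r ∉ σ sl := by
        intro sl hsl hzs
        obtain ⟨hslr, u, xm, hxm, hu, hxmy⟩ := hrel sl hsl
        obtain ⟨hzu, hyxm⟩ := sep hT hslr hu (hT.mem2 hxm) (hT.t2 _ _ _ hz)
          (hT.t2 _ _ _ hxm) hzs
        exact hxmy y (by simp) hyxm.symm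
      refine ⟨?_, hys.tail, ?_⟩
      · rw [show List.Chain' _ _ = List.IsChain _ _ from rfl, List.isChain_append]
        refine ⟨hS, by simp, ?_⟩
        intro sl hsl w hw
        simp at hw
        subst hw
        exact hzlast sl hsl
      · intro w hw y₂ hy₂
        simp only [List.getLast?_concat, Option.mem_def, Option.some.injEq] at hw
        subst hw
        cases ys' with
        | nil => simp at hy₂
        | cons b l =>
          simp only [List.head?_cons, Option.mem_def, Option.some.injEq] at hy₂
          subst hy₂
          intro hzy
          exact (List.isChain_cons_cons.mp hys).1 (hzy ▸ hT.mem3 hz)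
    · rw [if_neg hmem]
      refine ⟨hS, List.isChain_cons_cons.mpr ⟨hmem, hys⟩, ?_⟩
      intro sl hsl w hw
      simp at hw
      subst hw
      exact (hrel sl hsl).1

lemma good_mulNeg (hT : Tri σ T) (q : P) {pr : List P × List P} (h : GoodPair σ pr) :
    GoodPair σ (mulNegL σ T q pr) := by
  obtain ⟨xs, ys⟩ := pr
  obtain ⟨h1, h2, h3⟩ := h
  cases xs with
  | nil =>
    rw [mulNegL_nil]
    exact good_negStep hT (by simp [List.Chain']) h2 (by simp)
  | cons x xs' =>
    by_cases hq : q = x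
    · rw [mulNegL_cons, if_pos hq]
      exact GoodPair.tail1 ⟨h1, h2, h3⟩
    · rw [mulNegL_cons, if_neg hq]
      obtain ⟨S, r, u, hpush, hchS, hlast, humem, hlne, -⟩ := master hT xs' x q h1 hq
      rw [hpush]
      apply good_negStep hT hchS h2
      intro sl hsl
      rw [List.getLast?_eq_getLast_of_ne_nil (List.cons_ne_nil _ _), Option.mem_def,
        Option.some.injEq] at hsl
      subst hsl
      refine ⟨hlne, u, (x :: xs').getLast (List.cons_ne_nil _ _), hlast, humem, ?_⟩
      exact h3 _ (List.getLast?_eq_getLast_of_ne_nil (List.cons_ne_nil _ _) ▸ rfl)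

lemma good_mulPos (hT : Tri σ T) (q : P) {pr : List P × List P} (h : GoodPair σ pr) :
    GoodPair σ (mulPosL σ T q pr) := by
  obtain ⟨xs, ys⟩ := pr
  obtain ⟨h1, h2, h3⟩ := h
  cases xs with
  | nil =>
    cases ys with
    | nil => simp [GoodPair, List.Chain']
    | cons y ys' =>
      rw [mulPosL_nil_cons]
      by_cases hq : q = y
      · rw [if_pos hq]
        exact ⟨by simp [List.Chain'], h2.tail, by simp⟩
      · rw [if_neg hq]
        refine ⟨by simp [List.Chain'], h2, ?_⟩
        intro w hw v hv
        simp at hw hv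
        subst hw
        subst hv
        exact hq
  | cons x xs' =>
    rw [mulPosL_cons]
    by_cases hmem : x ∈ σ q
    · rw [if_pos hmem]
      exact good_mulNeg hT _ (GoodPair.tail1 ⟨h1, h2, h3⟩)
    · rw [if_neg hmem]
      refine ⟨List.isChain_cons_cons.mpr ⟨hmem, h1⟩, h2, ?_⟩
      intro w hw
      apply h3
      rwa [List.getLast?_cons_cons] at hw



/-! ### inverse laws -/

lemma cross_ne {xs ys : List P} (h3 : ∀ x ∈ xs.getLast?, ∀ y ∈ ys.head?, x ≠ y)
    (hxs : xs ≠ []) {v : P} (hy : ys.head? = some v) : xs.getLast hxs ≠ v :=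
  h3 _ (Option.mem_def.mpr (List.getLast?_eq_getLast_of_ne_nil hxs)) v (Option.mem_def.mpr hy)

lemma mulPos_mulNeg (hT : Tri σ T) (p : P) {pr : List P × List P} (h : GoodPair σ pr) :
    mulPosL σ T p (mulNegL σ T p pr) = pr := by
  obtain ⟨xs, ys⟩ := pr
  obtain ⟨h1, h2, h3⟩ := h
  cases xs with
  | nil =>
    rw [mulNegL_nil]
    cases ys with
    | nil =>
      rw [negStep_nil, mulPosL_nil_cons, if_pos rfl]
    | cons y₁ ys₁ =>
      rw [negStep_cons]
      by_cases hm : p ∈ σ y₁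
      · rw [if_pos hm]
        have hc : (y₁, p, tri T y₁ p) ∈ T := tri_mem hT hm
        have hc' : (p, tri T y₁ p, y₁) ∈ T := hT.t2 _ _ _ hc
        have hcp : tri T y₁ p ∈ σ p := hT.mem1 hc'
        simp only [List.nil_append]
        rw [mulPosL_cons, if_pos hcp, tri_eq hT hc', mulNegL_nil]
        cases ys₁ with
        | nil => rw [negStep_nil]
        | cons y₂ ys₂ =>
          rw [negStep_cons, if_neg (List.isChain_cons_cons.mp h2).1]
      · rw [if_neg hm, mulPosL_nil_cons, if_pos rfl]
  | cons x xs' =>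
    by_cases hp : p = x
    · rw [mulNegL_cons, if_pos hp]
      subst hp
      cases xs' with
      | nil =>
        cases ys with
        | nil => rw [mulPosL_nil_nil]
        | cons y ys' =>
          rw [mulPosL_nil_cons, if_neg (h3 p (by simp) y (by simp))]
      | cons x₂ xs₂ =>
        rw [mulPosL_cons, if_neg (List.isChain_cons_cons.mp h1).1]
    · rw [mulNegL_cons, if_neg hp]
      obtain ⟨S, r, u, hpush, hchS, hlast, humem, hlne, hrev⟩ := master hT xs' x p h1 hp
      have heq := hpush.symm.trans (pushCore_cons p x xs')
      injection heq with heq1 heq2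
      injection heq1 with heq0 hS_eq
      have hd1p : (DD σ T p x).1 ∈ σ p := hT.mem1 (DD_rel1 hT hp)
      have htri : tri T p (DD σ T p x).1 = lp σ p x := tri_eq hT (DD_rel1 hT hp)
      have hUinR : u ∈ σ r := hT.mem2 hlast
      have hrulx : (r, u, (x :: xs').getLast (List.cons_ne_nil x xs')) ∈ T := hT.t2 _ _ _ hlast
      have htriru : tri T r u = (x :: xs').getLast (List.cons_ne_nil x xs') := tri_eq hT hrulx
      have hu1S : ∀ w ∈ S.head?, lp σ p x ≠ w := by
        intro w hw
        cases xs' with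
        | nil =>
          rw [hS_eq] at hw
          simp at hw
        | cons x₂ xs₂ =>
          rw [hS_eq, pushCore_cons] at hw
          simp only [List.head?_cons, Option.mem_def, Option.some.injEq] at hw
          subst hw
          have ht1x : (DD σ T p x).2 ∈ σ x := hT.mem1 (DD_rel2 hT hp)
          have ht1x2 : (DD σ T p x).2 ≠ x₂ := fun hh => (List.isChain_cons_cons.mp h1).1 (hh ▸ ht1x)
          intro hE
          have hc1 : ((DD σ T p x).2, lp σ p x, x) ∈ T := hT.t2 _ _ _ (DD_rel2 hT hp)
          have hc2 := DD_rel1 hT ht1x2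
          rw [← hE] at hc2
          have hxeq := hT.t3 _ _ _ _ hc1 hc2
          exact (List.isChain_cons_cons.mp h1).1 (by rw [hxeq]; exact mem_lp_right ht1x2)
      have hfin : ∀ tail, mulNegL σ T (lp σ p x) (S, r :: tail) = (x :: xs', tail) := by
        intro tail
        rw [mulNegL_eq_negStep _ _ _ hu1S, hrev, negStep_cons, if_pos hUinR, htriru,
          List.dropLast_append_getLast]
      rw [hpush]
      cases ys with
      | nil =>
        rw [negStep_nil, mulPosL_cons, if_pos hd1p, htri, hfin]
      | cons y₁ ys₁ =>
        rw [negStep_cons]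
        by_cases hry : r ∈ σ y₁
        · rw [if_pos hry]
          have hzrel : (y₁, r, tri T y₁ r) ∈ T := tri_mem hT hry
          have hzrel' : (r, tri T y₁ r, y₁) ∈ T := hT.t2 _ _ _ hzrel
          have hlxy : (x :: xs').getLast (List.cons_ne_nil x xs') ≠ y₁ :=
            cross_ne h3 (by simp) (by simp)
          have huzz : u ≠ tri T y₁ r := by
            intro hE
            rw [← hE] at hzrel'
            exact hlxy (hT.t3 _ _ _ _ hrulx hzrel')
          have hDDz : DD σ T u (tri T y₁ r) = ((x :: xs').getLast (List.cons_ne_nil x xs'), y₁) :=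
            DD_eq_of hT hrulx hzrel' huzz
          have hu1Szz : ∀ w ∈ (S ++ [tri T y₁ r]).head?, lp σ p x ≠ w := by
            intro w hw
            cases xs' with
            | nil =>
              have hSnil : S = [] := by
                rw [hS_eq]; rfl
              rw [hSnil] at hw
              simp only [List.nil_append, List.head?_cons, Option.mem_def,
                Option.some.injEq] at hw
              subst hw
              have hu1u : u = lp σ p x := by
                rw [hSnil, pushCore_nil] at hrev
                exact (congrArg Prod.snd hrev).symm
              rw [← hu1u]
              exact fun hE => huzz hE
            | cons x₂ xs₂ =>
              rw [hS_eq, pushCore_cons] at hw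
              simp only [List.cons_append, List.head?_cons, Option.mem_def,
                Option.some.injEq] at hw
              subst hw
              exact hu1S _ (by rw [hS_eq, pushCore_cons]; rfl)
          simp only [List.cons_append]
          rw [mulPosL_cons, if_pos hd1p, htri, mulNegL_eq_negStep _ _ _ hu1Szz,
            pushCore_concat, hrev, hDDz]
          simp only [List.dropLast_append_getLast]
          cases ys₁ with
          | nil => rw [negStep_nil]
          | cons y₂ ys₂ =>
            rw [negStep_cons, if_neg (List.isChain_cons_cons.mp h2).1]
        · rw [if_neg hry, mulPosL_cons, if_pos hd1p, htri, hfin]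



lemma mulNeg_mulPos (hT : Tri σ T) (p : P) {pr : List P × List P} (h : GoodPair σ pr) :
    mulNegL σ T p (mulPosL σ T p pr) = pr := by
  obtain ⟨xs, ys⟩ := pr
  obtain ⟨h1, h2, h3⟩ := h
  cases xs with
  | nil =>
    cases ys with
    | nil =>
      rw [mulPosL_nil_nil, mulNegL_cons, if_pos rfl]
    | cons y ys' =>
      rw [mulPosL_nil_cons]
      by_cases hp : p = y
      · rw [if_pos hp]
        subst hp
        rw [mulNegL_nil]
        cases ys' with
        | nil => rw [negStep_nil]
        | cons y₂ ys₂ => rw [negStep_cons, if_neg (List.isChain_cons_cons.mp h2).1]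
      · rw [if_neg hp, mulNegL_cons, if_pos rfl]
  | cons x xs' =>
    rw [mulPosL_cons]
    by_cases hm : x ∈ σ p
    · rw [if_pos hm]
      have hpxz : (p, x, tri T p x) ∈ T := tri_mem hT hm
      have hzpx : (tri T p x, p, x) ∈ T := hT.t2 _ _ _ (hT.t2 _ _ _ hpxz)
      have hpz : p ∈ σ (tri T p x) := hT.mem1 hzpx
      have htzp : tri T (tri T p x) p = x := tri_eq hT hzpx
      cases xs' with
      | nil =>
        rw [mulNegL_nil]
        cases ys with
        | nil =>
          rw [negStep_nil, mulNegL_nil, negStep_cons, if_pos hpz, htzp]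
          simp
        | cons y₁ ys₁ =>
          rw [negStep_cons]
          by_cases hzy : tri T p x ∈ σ y₁
          · rw [if_pos hzy]
            have hcrel : (y₁, tri T p x, tri T y₁ (tri T p x)) ∈ T := tri_mem hT hzy
            have hcrel' : (tri T p x, tri T y₁ (tri T p x), y₁) ∈ T := hT.t2 _ _ _ hcrel
            have hpc : p ≠ tri T y₁ (tri T p x) := by
              intro hE
              rw [← hE] at hcrel'
              exact cross_ne h3 (by simp) (by simp : (y₁ :: ys₁).head? = some y₁)
                (by simpa using hT.t3 _ _ _ _ hzpx hcrel')
            have hDD : DD σ T p (tri T y₁ (tri T p x)) = (x, y₁) :=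
              DD_eq_of hT hzpx hcrel' hpc
            simp only [List.nil_append]
            rw [mulNegL_cons, if_neg hpc, pushCore_cons, hDD]
            simp only [pushCore_nil]
            cases ys₁ with
            | nil => rw [negStep_nil]
            | cons y₂ ys₂ => rw [negStep_cons, if_neg (List.isChain_cons_cons.mp h2).1]
          · rw [if_neg hzy, mulNegL_nil, negStep_cons, if_pos hpz, htzp,
              List.nil_append]
      | cons x₂ xs₂ =>
        have hzx : tri T p x ∈ σ x := hT.mem2 hpxz
        have hzx2 : tri T p x ≠ x₂ := fun hh => (List.isChain_cons_cons.mp h1).1 (hh ▸ hzx)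
        obtain ⟨S, r, u, hpush, hchS, hlast, humem, hlne, hrev⟩ :=
          master hT xs₂ x₂ (tri T p x) (List.isChain_cons_cons.mp h1).2 hzx2
        rw [mulNegL_cons, if_neg hzx2, hpush]
        have hrelA : (tri T p x, (DD σ T (tri T p x) x₂).1, lp σ (tri T p x) x₂) ∈ T :=
          DD_rel1 hT hzx2
        have hps2 : p ≠ (DD σ T (tri T p x) x₂).1 := by
          intro hE
          rw [← hE] at hrelA
          have := hT.t3 _ _ _ _ hzpx hrelA
          exact (List.isChain_cons_cons.mp h1).1 (by rw [this]; exact mem_lp_right hzx2)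
        have hDDps : DD σ T p (DD σ T (tri T p x) x₂).1 = (x, lp σ (tri T p x) x₂) :=
          DD_eq_of hT hzpx hrelA hps2
        have hUinR : u ∈ σ r := hT.mem2 hlast
        have hrulx : (r, u, (x₂ :: xs₂).getLast (List.cons_ne_nil x₂ xs₂)) ∈ T :=
          hT.t2 _ _ _ hlast
        have htriru : tri T r u = (x₂ :: xs₂).getLast (List.cons_ne_nil x₂ xs₂) :=
          tri_eq hT hrulx
        have hfin : ∀ tail,
            mulNegL σ T p ((DD σ T (tri T p x) x₂).1 :: S, r :: tail) =
              (x :: x₂ :: xs₂, tail) := by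
          intro tail
          rw [mulNegL_cons, if_neg hps2, pushCore_cons, hDDps, hrev, negStep_prepend,
            negStep_cons, if_pos hUinR, htriru, List.dropLast_append_getLast]
        cases ys with
        | nil =>
          rw [negStep_nil, hfin]
        | cons y₁ ys₁ =>
          rw [negStep_cons]
          by_cases hry : r ∈ σ y₁
          · rw [if_pos hry]
            have hzrel : (y₁, r, tri T y₁ r) ∈ T := tri_mem hT hry
            have hzrel' : (r, tri T y₁ r, y₁) ∈ T := hT.t2 _ _ _ hzrel
            have hlxy : (x₂ :: xs₂).getLast (List.cons_ne_nil x₂ xs₂) ≠ y₁ := by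
              have := cross_ne h3 (List.cons_ne_nil x (x₂ :: xs₂))
                (by simp : (y₁ :: ys₁).head? = some y₁)
              rwa [List.getLast_cons (List.cons_ne_nil x₂ xs₂)] at this
            have huzz : u ≠ tri T y₁ r := by
              intro hE
              rw [← hE] at hzrel'
              exact hlxy (hT.t3 _ _ _ _ hrulx hzrel')
            have hDDz : DD σ T u (tri T y₁ r) =
                ((x₂ :: xs₂).getLast (List.cons_ne_nil x₂ xs₂), y₁) :=
              DD_eq_of hT hrulx hzrel' huzz
            simp only [List.cons_append]
            rw [mulNegL_cons, if_neg hps2, pushCore_cons, hDDps, pushCore_concat, hrev, hDDz]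
            simp only [List.dropLast_append_getLast]
            rw [negStep_prepend]
            cases ys₁ with
            | nil => rw [negStep_nil]
            | cons y₂ ys₂ => rw [negStep_cons, if_neg (List.isChain_cons_cons.mp h2).1]
          · rw [if_neg hry, hfin]
    · rw [if_neg hm, mulNegL_cons, if_pos rfl]



/-! ### the triangle law: `a_x a_y = a_z⁻¹` as an operation on normal forms -/

lemma mulPos_mulPos (hT : Tri σ T) {x y z : P} (hxyz : (x, y, z) ∈ T)
    {pr : List P × List P} (h : GoodPair σ pr) :
    mulPosL σ T x (mulPosL σ T y pr) = mulNegL σ T z pr := by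
  obtain ⟨xs, ys⟩ := pr
  obtain ⟨h1, h2, h3⟩ := h
  have hyx : y ∈ σ x := hT.mem1 hxyz
  have htxy : tri T x y = z := tri_eq hT hxyz
  have hyzx : (y, z, x) ∈ T := hT.t2 _ _ _ hxyz
  have hzxy : (z, x, y) ∈ T := hT.t2 _ _ _ hyzx
  cases xs with
  | nil =>
    cases ys with
    | nil =>
      rw [mulPosL_nil_nil, mulPosL_cons, if_pos hyx, htxy]
    | cons y₁ ys₁ =>
      rw [mulPosL_nil_cons]
      by_cases hy1 : y = y₁
      · subst hy1
        rw [if_pos rfl, mulNegL_nil, negStep_cons, if_pos (hT.mem2 hxyz), tri_eq hT hyzx,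
          List.nil_append]
        cases ys₁ with
        | nil => rw [mulPosL_nil_nil]
        | cons y₂ ys₂ =>
          have hxy2 : x ≠ y₂ := fun hE => (List.isChain_cons_cons.mp h2).1 (hE ▸ hyx)
          rw [mulPosL_nil_cons, if_neg hxy2]
      · rw [if_neg hy1, mulPosL_cons, if_pos hyx, htxy, mulNegL_nil]
  | cons w xs₁ =>
    rw [mulPosL_cons]
    by_cases hwy : w ∈ σ y
    · rw [if_pos hwy]
      have hvrel : (y, w, tri T y w) ∈ T := tri_mem hT hwy
      have hv2 : (tri T y w, y, w) ∈ T := hT.t2 _ _ _ (hT.t2 _ _ _ hvrel)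
      by_cases hzw : z = w
      · rw [mulNegL_cons, if_pos hzw]
        have : tri T y w = x := tri_eq hT (hzw ▸ hyzx)
        rw [this]
        exact mulPos_mulNeg hT x (GoodPair.tail1 ⟨h1, h2, h3⟩)
      · have hDDzw : DD σ T z w = (x, tri T y w) := DD_eq_of hT hyzx hvrel hzw
        have hxv : x ≠ tri T y w := by
          intro hE
          rw [← hE] at hvrel
          exact hzw (hT.t3 _ _ _ _ hxyz (hT.t2 _ _ _ (hT.t2 _ _ _ hvrel)))
        have hyvm : y ∈ σ (tri T y w) := hT.mem1 hv2
        cases xs₁ with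
        | nil =>
          rw [mulNegL_nil, mulNegL_cons, if_neg hzw, pushCore_cons, hDDzw]
          simp only [pushCore_nil]
          cases ys with
          | nil =>
            rw [negStep_nil, negStep_nil, mulPosL_nil_cons, if_neg hxv]
          | cons y₁ ys₁ =>
            rw [negStep_cons, negStep_cons]
            by_cases hvy : tri T y w ∈ σ y₁
            · rw [if_pos hvy, if_pos hvy, List.nil_append]
              have hcrel : (y₁, tri T y w, tri T y₁ (tri T y w)) ∈ T := tri_mem hT hvy
              have hcx : tri T y₁ (tri T y w) ∉ σ x := by
                intro hmem
                obtain ⟨hcy, hyw⟩ := sep hT hxv hyx hyvm (hT.t2 _ _ _ hcrel) hv2 hmem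
                exact h3 w (by simp) y₁ (by simp) hyw.symm
              rw [mulPosL_cons, if_neg hcx, List.singleton_append]
            · rw [if_neg hvy, if_neg hvy, mulPosL_nil_cons, if_neg hxv]
        | cons w₂ xs₂ =>
          have hvw : tri T y w ∈ σ w := hT.mem2 hvrel
          have hvw2 : tri T y w ≠ w₂ := fun hE => (List.isChain_cons_cons.mp h1).1 (hE ▸ hvw)
          obtain ⟨S, r, u, hpushv, hchS, hlast, humem, hlne, hrev⟩ :=
            master hT xs₂ w₂ (tri T y w) (List.isChain_cons_cons.mp h1).2 hvw2
          have hs2x : (DD σ T (tri T y w) w₂).1 ∉ σ x := by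
            intro hmem
            obtain ⟨hcy, hyw⟩ := sep hT hxv hyx hyvm (DD_rel1 hT hvw2) hv2 hmem
            exact (List.isChain_cons_cons.mp h1).1 (by rw [← hyw]; exact mem_lp_right hvw2)
          have hp1 : (pushCore σ T (tri T y w) (w₂ :: xs₂)).1 =
              (DD σ T (tri T y w) w₂).1 :: S := by rw [hpushv]
          have hp2 : (pushCore σ T (tri T y w) (w₂ :: xs₂)).2 = r := by rw [hpushv]
          have hD1 : (DD σ T z w).1 = x := by rw [hDDzw]
          have hD2 : (DD σ T z w).2 = tri T y w := by rw [hDDzw]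
          rw [mulNegL_cons (tri T y w) w₂ xs₂ ys, if_neg hvw2, hp1, hp2]
          rw [mulNegL_cons z w (w₂ :: xs₂) ys, if_neg hzw, pushCore_cons z w (w₂ :: xs₂),
            hD1, hD2, hp1, hp2]
          rw [negStep_prepend ((DD σ T (tri T y w) w₂).1) S r ys]
          rw [mulPosL_cons, if_neg hs2x]
          rw [negStep_prepend x ((DD σ T (tri T y w) w₂).1 :: S) r ys,
            negStep_prepend ((DD σ T (tri T y w) w₂).1) S r ys]
    · rw [if_neg hwy, mulPosL_cons, if_pos hyx, htxy]



/-! ### assembly -/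

lemma rel_one {x y z : P} (h : (x, y, z) ∈ T) : a T x * a T y * a T z = 1 := by
  have hm : FreeGroup.of x * FreeGroup.of y * FreeGroup.of z ∈ A2Rels T := ⟨(x, y, z), h, rfl⟩
  show PresentedGroup.mk (A2Rels T) (FreeGroup.of x) * PresentedGroup.mk (A2Rels T) (FreeGroup.of y)
    * PresentedGroup.mk (A2Rels T) (FreeGroup.of z) = 1
  rw [← map_mul, ← map_mul]
  exact (QuotientGroup.eq_one_iff _).mpr (Subgroup.subset_normalClosure hm)

noncomputable def permOf (hT : Tri σ T) (p : P) :
    Equiv.Perm {pr : List P × List P // GoodPair σ pr} where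
  toFun nf := ⟨mulPosL σ T p nf.1, good_mulPos hT p nf.2⟩
  invFun nf := ⟨mulNegL σ T p nf.1, good_mulNeg hT p nf.2⟩
  left_inv nf := Subtype.ext (mulNeg_mulPos hT p nf.2)
  right_inv nf := Subtype.ext (mulPos_mulNeg hT p nf.2)

lemma rels_satisfied (hT : Tri σ T) :
    ∀ r ∈ A2Rels T, FreeGroup.lift (permOf hT) r = 1 := by
  rintro r ⟨⟨x, y, z⟩, hmem, rfl⟩
  simp only [map_mul, FreeGroup.lift_apply_of]
  refine Equiv.ext fun nf => Subtype.ext ?_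
  show mulPosL σ T x (mulPosL σ T y (mulPosL σ T z nf.1)) = nf.1
  rw [mulPos_mulPos hT hmem (good_mulPos hT z nf.2)]
  exact mulNeg_mulPos hT z nf.2

noncomputable def phi (hT : Tri σ T) :
    A2TildeGroup T →* Equiv.Perm {pr : List P × List P // GoodPair σ pr} :=
  PresentedGroup.toGroup (rels_satisfied hT)

lemma phi_of (hT : Tri σ T) (p : P) : phi hT (a T p) = permOf hT p :=
  PresentedGroup.toGroup.of (rels_satisfied hT)

lemma inj_pair (hT : Tri σ T) {s t s' t' : P} (hst : s ≠ t) (hst' : s' ≠ t')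
    (h : a T s * (a T t)⁻¹ = a T s' * (a T t')⁻¹) : s = s' ∧ t = t' := by
  have base : GoodPair σ (([] : List P), ([] : List P)) := ⟨by simp [List.Chain'], by simp [List.Chain'], by simp⟩
  have key : ∀ u v : P, u ≠ v →
      ((phi hT (a T u * (a T v)⁻¹)) ⟨([], []), base⟩).1 = ([u], [v]) := by
    intro u v huv
    rw [map_mul, map_inv, phi_of, phi_of]
    show mulPosL σ T u (mulNegL σ T v ([], [])) = ([u], [v])
    rw [mulNegL_nil, negStep_nil, mulPosL_nil_cons, if_neg huv]
  have e : (([s], [t]) : List P × List P) = ([s'], [t']) := by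
    rw [← key s t hst, ← key s' t' hst', h]
  rw [Prod.mk.injEq, List.cons.injEq, List.cons.injEq] at e
  exact ⟨e.1.1, e.2.1⟩

end A2Aux

/-- in an A₂-tilde group, for distinct generators the element
`a_x⁻¹ · a_y` can be rewritten uniquely as `a_s · a_t⁻¹` with `s ≠ t`. -/
theorem a2_diamond (P L : Type) [Fintype P] [Fintype L] [Membership P L]
    [Configuration.ProjectivePlane P L] (σ : P ≃ L) (T : Set (P × P × P))
    (hT1 : ∀ x y : P, (∃ z, (x, y, z) ∈ T) ↔ y ∈ σ x)
    (hT2 : ∀ x y z : P, (x, y, z) ∈ T → (y, z, x) ∈ T)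
    (hT3 : ∀ x y z z' : P, (x, y, z) ∈ T → (x, y, z') ∈ T → z = z')
    (x y : P) (hxy : x ≠ y) :
    ∃! st : P × P, st.1 ≠ st.2 ∧ (a T x)⁻¹ * a T y = a T st.1 * (a T st.2)⁻¹ := by
  have hT : A2Aux.Tri σ T := ⟨hT1, hT2, hT3⟩
  have h1 : (x, (A2Aux.DD σ T x y).1, A2Aux.lp σ x y) ∈ T := A2Aux.DD_rel1 hT hxy
  have h2 : (y, (A2Aux.DD σ T x y).2, A2Aux.lp σ x y) ∈ T := A2Aux.DD_rel2 hT hxy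
  have hst : (A2Aux.DD σ T x y).1 ≠ (A2Aux.DD σ T x y).2 := A2Aux.DD_ne hT hxy
  have hrel1 := A2Aux.rel_one h1
  have hrel2 := A2Aux.rel_one h2
  have hid : (a T x)⁻¹ * a T y = a T (A2Aux.DD σ T x y).1 * (a T (A2Aux.DD σ T x y).2)⁻¹ := by
    have e1 : (a T x)⁻¹ = a T (A2Aux.DD σ T x y).1 * a T (A2Aux.lp σ x y) := by
      rw [inv_eq_iff_mul_eq_one, ← mul_assoc]
      exact hrel1
    have e2 : (a T y)⁻¹ = a T (A2Aux.DD σ T x y).2 * a T (A2Aux.lp σ x y) := by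
      rw [inv_eq_iff_mul_eq_one, ← mul_assoc]
      exact hrel2
    have e3 : a T y = (a T (A2Aux.lp σ x y))⁻¹ * (a T (A2Aux.DD σ T x y).2)⁻¹ := by
      rw [← mul_inv_rev, ← e2, inv_inv]
    rw [e1, e3]
    group
  refine ⟨((A2Aux.DD σ T x y).1, (A2Aux.DD σ T x y).2), ⟨hst, hid⟩, ?_⟩
  rintro ⟨s', t'⟩ ⟨hst', hid'⟩
  obtain ⟨hs, ht⟩ := A2Aux.inj_pair hT hst' hst (hid'.symm.trans hid)
  exact Prod.ext hs ht
end
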